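/- arXiv:1703.06706 — 5 statements merged into one kernel-verified Lean document; each statement's English description precedes it below -/
import Mathlib

section
/- For every infinite cardinal λ and all positive integers c and d, there exists a cardinal κ > λ such that for every commutative semigroup (G,+) of cardinality κ and every coloring f : G → c, there exist a subset H ⊆ G of cardinality λ and positive integers a, b such that all sums of j-many distinct elements of H, for every j in the arithmetic progression {a, a+b, a+2b, …, a+d·b}, receive the same color under f. -/
open Cardinal

universe u

/-- Sum of a nonempty tuple of elements of a commutative semigroup. -/
def tupSum {G : Type u} [AddCommSemigroup G] : {n : ℕ} → (Fin (n + 1) → G) → G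
  | 0, g => g 0
  | _ + 1, g => tupSum (fun i => g i.castSucc) + g (Fin.last _)

/-- `FSMono f A H i` : all sums of `j`-many pairwise distinct elements of `H`,
for `j ∈ A`, have color `i` under `f` (i.e. `FS^A(H)` is monochromatic of color `i`). -/
def FSMono {G : Type u} [AddCommSemigroup G] {c : ℕ} (f : G → Fin c)
    (A : Set ℕ) (H : Set G) (i : Fin c) : Prop :=
  ∀ m : ℕ, m + 1 ∈ A → ∀ g : Fin (m + 1) → G, Function.Injective g →
    (∀ j, g j ∈ H) → f (tupSum g) = i

noncomputable section
open Set Combinatorics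

lemma coe_tupSum {G : Type u} [AddCommSemigroup G] :
    ∀ {n : ℕ} (g : Fin (n + 1) → G), ((tupSum g : G) : WithZero G) = ∑ i, (g i : WithZero G)
  | 0, g => by simp [tupSum, Fin.sum_univ_one]
  | n + 1, g => by
    rw [tupSum, WithZero.coe_add, coe_tupSum, Fin.sum_univ_castSucc (f := fun i => (g i : WithZero G))]

theorem vdw_fin (c d : ℕ) (hc : 0 < c) : ∃ N : ℕ, 0 < N ∧
    ∀ χ : ℕ → Fin c, ∃ a b : ℕ, 0 < a ∧ 0 < b ∧ a + d * b ≤ N ∧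
      ∃ i : Fin c, ∀ k ≤ d, χ (a + k * b) = i := by
  classical
  obtain ⟨ι, _inst, hι⟩ := Line.exists_mono_in_high_dimension (Fin (d + 1)) (Fin c)
  refine ⟨Fintype.card ι * d + 1, Nat.succ_pos _, fun χ => ?_⟩
  obtain ⟨l, i₀, hl⟩ := hι fun v => χ (1 + ∑ i, (v i : ℕ))
  set s : Finset ι := Finset.univ.filter (fun i => l.idxFun i = none) with hs
  set B : ℕ := ∑ i ∈ sᶜ, ((l.idxFun i).map (fun (y : Fin (d+1)) => (y : ℕ))).getD 0 with hB
  have key : ∀ x : Fin (d + 1),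
      ∑ i, (((l.idxFun i).getD x : Fin (d+1)) : ℕ) = s.card * (x : ℕ) + B := by
    intro x
    rw [← Finset.sum_add_sum_compl s]
    congr 1
    · rw [Finset.sum_congr rfl (fun i hi => ?_), Finset.sum_const, smul_eq_mul]
      rw [hs, Finset.mem_filter] at hi
      rw [hi.right]
      rfl
    · apply Finset.sum_congr rfl
      intro i hi
      rw [hs, Finset.compl_filter, Finset.mem_filter] at hi
      obtain ⟨y, hy⟩ := Option.ne_none_iff_exists.mp hi.right
      rw [← hy]
      simp
  have hscard : 0 < s.card := by
    refine Finset.card_pos.mpr ⟨l.proper.choose, ?_⟩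
    rw [hs, Finset.mem_filter]
    exact ⟨Finset.mem_univ _, l.proper.choose_spec⟩
  refine ⟨1 + B, s.card, by omega, hscard, ?_, i₀, fun k hk => ?_⟩
  · have hBle : B ≤ sᶜ.card * d := by
      rw [hB]
      refine (Finset.sum_le_card_nsmul _ _ d ?_).trans (le_of_eq (by simp [mul_comm]))
      intro i _
      cases h : l.idxFun i with
      | none => simp
      | some y => simpa using Nat.lt_succ_iff.mp y.isLt
    have h1 := Finset.card_add_card_compl s
    have h2 : s.card * d + sᶜ.card * d = Fintype.card ι * d := by rw [← add_mul, h1]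
    have h3 : d * s.card = s.card * d := mul_comm _ _
    omega
  · have h := hl ⟨k, Nat.lt_succ_of_le hk⟩
    convert h using 2
    have hx : ((⟨k, Nat.lt_succ_of_le hk⟩ : Fin (d+1)) : ℕ) = k := rfl
    rw [Line.apply_def]
    rw [key, hx]
    ring

def erc (l : Cardinal.{u}) : ℕ → Cardinal.{u}
  | 0 => l
  | n + 1 => 2 ^ erc l n

lemma le_erc (l : Cardinal.{u}) : ∀ n, l ≤ erc l n
  | 0 => le_rfl
  | n + 1 => (le_erc l n).trans (Cardinal.cantor _).le

lemma aleph0_le_erc {l : Cardinal.{u}} (hl : ℵ₀ ≤ l) (n : ℕ) : ℵ₀ ≤ erc l n :=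
  hl.trans (le_erc l n)

theorem erdosRado (l : Cardinal.{u}) (hl : ℵ₀ ≤ l) (ξ : Type u) [Finite ξ] :
    ∀ (n : ℕ) (θ : Type u) (F : Finset θ → ξ), erc l n < #θ →
      ∃ H : Set θ, #H = l ∧ ∃ i : ξ, ∀ s : Finset θ, ↑s ⊆ H → s.card = n + 1 → F s = i := by
  intro n
  induction n with
  | zero =>
    intro θ F hθ
    classical
    have hlθ : l < #θ := hθ
    have hfib : ∃ i : ξ, l < #{x : θ | F {x} = i} := by
      by_contra hcon
      push_neg at hcon
      have hcover : (⋃ i : ξ, {x : θ | F {x} = i}) = Set.univ := by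
        ext x; simp
      have h1 : #θ ≤ sum fun i : ξ => #{x : θ | F {x} = i} := by
        calc #θ = #(Set.univ : Set θ) := mk_univ.symm
        _ = #(⋃ i : ξ, {x : θ | F {x} = i} : Set θ) := by rw [hcover]
        _ ≤ _ := mk_iUnion_le_sum_mk
      have h2 : (sum fun i : ξ => #{x : θ | F {x} = i}) ≤ sum fun _ : ξ => l :=
        sum_le_sum _ _ fun i => hcon i
      have h4 : #ξ * l ≤ ℵ₀ * l := mul_le_mul_left mk_le_aleph0 l
      have h5 : ℵ₀ * l = l := by
        rw [mul_eq_max le_rfl hl, max_eq_right hl]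
      have : #θ ≤ l := by
        calc #θ ≤ sum fun _ : ξ => l := h1.trans h2
        _ = #ξ * l := sum_const' _ _
        _ ≤ ℵ₀ * l := h4
        _ = l := h5
      exact absurd hlθ (not_lt.mpr this)
    obtain ⟨i, hi⟩ := hfib
    obtain ⟨H, hHsub, hHcard⟩ := le_mk_iff_exists_subset.mp hi.le
    refine ⟨H, hHcard, i, fun s hs hcard => ?_⟩
    obtain ⟨x, rfl⟩ := Finset.card_eq_one.mp hcard
    have : x ∈ {x : θ | F {x} = i} := hHsub (hs (by simp))
    exact this
  | succ n IH =>
    intro θ F hθ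
    classical
    set μ : Cardinal.{u} := erc l n with hμdef
    have hμ : ℵ₀ ≤ μ := aleph0_le_erc hl n
    have hθ2 : 2 ^ μ < #θ := hθ
    have h2μ : ℵ₀ ≤ 2 ^ μ := hμ.trans (cantor μ).le
    have hsucc_le : Order.succ μ ≤ 2 ^ μ := Order.succ_le_of_lt (cantor μ)
    have hθne : Nonempty θ := mk_ne_zero_iff.mp (aleph0_pos.trans_le (h2μ.trans hθ2.le)).ne'
    haveI hξne : Nonempty ξ := ⟨F ∅⟩
    set ι : Type u := (Order.succ μ).ord.ToType with hιdef
    have hικ : #ι = Order.succ μ := by rw [hιdef, mk_toType, card_ord]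
    have hιne : Nonempty ι := by
      rw [← mk_ne_zero_iff, hικ]
      exact (lt_of_lt_of_le aleph0_pos (hμ.trans (Order.le_succ μ))).ne'
    haveI hιwo : IsWellOrder ι (· < ·) := isWellOrder_lt
    haveI hιnomax : NoMaxOrder ι := Cardinal.noMaxOrder (hμ.trans (Order.le_succ μ))
    -- the type of an element over a set
    set typeFn : (Y : Set θ) → θ → ((Fin (n+1) → Y) → ξ) :=
      fun Y z v => F (insert z (Finset.image (fun j => (v j : θ)) Finset.univ)) with htypeFn
    -- witness choice
    set w : (Y : Set θ) → ((Fin (n+1) → Y) → ξ) → θ := fun Y τ =>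
      if h : ∃ z : θ, z ∉ Y ∧ typeFn Y z = τ then h.choose else Classical.arbitrary θ with hw
    have wspec : ∀ (Y : Set θ) (τ) (z : θ), z ∉ Y → typeFn Y z = τ →
        w Y τ ∉ Y ∧ typeFn Y (w Y τ) = τ := by
      intro Y τ z hz ht
      have h : ∃ z : θ, z ∉ Y ∧ typeFn Y z = τ := ⟨z, hz, ht⟩
      rw [hw]; simp only [dif_pos h]
      exact h.choose_spec
    -- the witness sets
    set WS : Set θ → Set θ := fun A =>
      Set.range (fun p : (Y : {Y : Set θ // Y ⊆ A ∧ #Y ≤ μ}) × ((Fin (n+1) → (Y.1 : Set θ)) → ξ) =>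
        w p.1.1 p.2) with hWS
    have wmem : ∀ (A : Set θ) (Y : Set θ) (τ), Y ⊆ A → #Y ≤ μ → w Y τ ∈ WS A :=
      fun A Y τ h1 h2 => ⟨⟨⟨Y, h1, h2⟩, τ⟩, rfl⟩
    have WScard : ∀ A : Set θ, #A ≤ 2 ^ μ → #(WS A) ≤ 2 ^ μ := by
      intro A hA
      refine mk_range_le.trans ?_
      rw [mk_sigma]
      have hbd : ∀ Y : {Y : Set θ // Y ⊆ A ∧ #Y ≤ μ},
          #((Fin (n+1) → (Y.1 : Set θ)) → ξ) ≤ 2 ^ μ := by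
        intro Y
        have e1 : #((Fin (n+1) → (Y.1 : Set θ)) → ξ) = #ξ ^ #(Fin (n+1) → (Y.1 : Set θ)) :=
          (power_def _ _).symm
        have e3 : #(Fin (n+1) → (Y.1 : Set θ)) ≤ μ := by
          have e2 : #(Fin (n+1) → (Y.1 : Set θ)) = #(ULift.{u} (Fin (n+1)) → (Y.1 : Set θ)) :=
            mk_congr (Equiv.arrowCongr Equiv.ulift.symm (Equiv.refl _))
          rw [e2, ← power_def, mk_fintype (ULift.{u} (Fin (n+1)))]
          simp only [Fintype.card_ulift, Fintype.card_fin]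
          calc #(Y.1 : Set θ) ^ ((n+1 : ℕ) : Cardinal) ≤ μ ^ ((n+1 : ℕ) : Cardinal) :=
            power_le_power_right Y.2.2
          _ = μ ^ (n+1 : ℕ) := power_natCast μ (n+1)
          _ = μ := power_nat_eq hμ (by omega)
        rw [e1]
        calc #ξ ^ #(Fin (n+1) → (Y.1 : Set θ)) ≤ #ξ ^ μ :=
              power_le_power_left (mk_ne_zero ξ) e3
        _ ≤ (2 ^ μ) ^ μ := power_le_power_right (mk_le_aleph0.trans h2μ)
        _ = 2 ^ (μ * μ) := (power_mul).symm
        _ = 2 ^ μ := by rw [mul_eq_self hμ]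
      calc (sum fun Y : {Y : Set θ // Y ⊆ A ∧ #Y ≤ μ} => #((Fin (n+1) → (Y.1 : Set θ)) → ξ))
          ≤ sum fun _ : {Y : Set θ // Y ⊆ A ∧ #Y ≤ μ} => 2 ^ μ := sum_le_sum _ _ hbd
      _ = #{Y : Set θ // Y ⊆ A ∧ #Y ≤ μ} * 2 ^ μ := sum_const' _ _
      _ ≤ 2 ^ μ * 2 ^ μ := by
          refine mul_le_mul_left ?_ _
          refine (mk_bounded_subset_le A μ).trans ?_
          calc max #A ℵ₀ ^ μ ≤ (2 ^ μ) ^ μ :=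
            power_le_power_right (max_le hA (hμ.trans (cantor μ).le))
          _ = 2 ^ (μ * μ) := (power_mul).symm
          _ = 2 ^ μ := by rw [mul_eq_self hμ]
      _ = 2 ^ μ := mul_eq_self h2μ
    -- the increasing chain of closure sets
    set X : ι → Set θ := WellFoundedLT.fix
      (fun (α : ι) ih => (⋃ b : Set.Iio α, ih b.1 b.2) ∪ WS (⋃ b : Set.Iio α, ih b.1 b.2))
      with hX
    have Xeq : ∀ α : ι, X α = (⋃ b : Set.Iio α, X b.1) ∪ WS (⋃ b : Set.Iio α, X b.1) :=
      fun α => WellFoundedLT.fix_eq _ α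
    have Xmono : ∀ {β α : ι}, β < α → X β ⊆ X α := by
      intro β α h
      rw [Xeq α]
      exact subset_union_left.trans' (subset_iUnion_of_subset ⟨β, h⟩ subset_rfl)
    have mk_Iio_le : ∀ α : ι, #(Set.Iio α) ≤ μ := by
      intro α
      have := mk_Iio_ord_toType (c := Order.succ μ) α
      exact Order.lt_succ_iff.mp this
    have Xcard : ∀ α : ι, #(X α) ≤ 2 ^ μ := by
      intro α
      induction α using WellFoundedLT.induction with
      | ind α ihα =>
        rw [Xeq α]
        have hprev : #(⋃ b : Set.Iio α, X b.1) ≤ 2 ^ μ := by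
          refine mk_iUnion_le_sum_mk.trans ?_
          calc (sum fun b : Set.Iio α => #(X b.1))
              ≤ sum fun _ : Set.Iio α => 2 ^ μ := sum_le_sum _ _ fun b => ihα b.1 b.2
          _ = #(Set.Iio α) * 2 ^ μ := sum_const' _ _
          _ ≤ (2 ^ μ) * 2 ^ μ :=
              mul_le_mul_left ((mk_Iio_le α).trans (cantor μ).le) _
          _ = 2 ^ μ := mul_eq_self h2μ
        refine (mk_union_le _ _).trans ?_
        have := WScard _ hprev
        calc #(⋃ b : Set.Iio α, X b.1) + #(WS (⋃ b : Set.Iio α, X b.1)) ≤ 2 ^ μ + 2 ^ μ :=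
          add_le_add hprev this
        _ = 2 ^ μ := add_eq_self h2μ
    set Xall : Set θ := ⋃ α : ι, X α with hXall
    have Xallcard : #Xall ≤ 2 ^ μ := by
      refine mk_iUnion_le_sum_mk.trans ?_
      calc (sum fun α : ι => #(X α)) ≤ sum fun _ : ι => 2 ^ μ := sum_le_sum _ _ Xcard
      _ = #ι * 2 ^ μ := sum_const' _ _
      _ ≤ (2 ^ μ) * 2 ^ μ := mul_le_mul_left (hικ.le.trans hsucc_le) _
      _ = 2 ^ μ := mul_eq_self h2μ
    -- a point outside the closure
    have hz : ∃ z : θ, z ∉ Xall := by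
      by_contra hcon
      push_neg at hcon
      have : #θ ≤ #Xall := by
        have : (Set.univ : Set θ) ⊆ Xall := fun x _ => hcon x
        calc #θ = #(Set.univ : Set θ) := mk_univ.symm
        _ ≤ #Xall := mk_le_mk_of_subset this
      exact absurd (this.trans Xallcard) (not_le.mpr hθ2)
    obtain ⟨zs, hzs⟩ := hz
    -- closure property
    have Ycl : ∀ Y : Set θ, Y ⊆ Xall → #Y ≤ μ → ∀ τ, w Y τ ∈ Xall := by
      intro Y hYsub hYcard τ
      have hidx : ∀ y : Y, ∃ α : ι, (y : θ) ∈ X α := by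
        intro y
        have := hYsub y.2
        rwa [hXall, Set.mem_iUnion] at this
      choose idx hidx using hidx
      have hbdd : Set.Bounded (· < ·) (Set.range idx) := by
        by_contra hnb
        have hcof : IsCofinal (Set.range idx) := by
          intro a
          by_contra hna
          push_neg at hna
          exact hnb ⟨a, fun b hb => hna b hb⟩
        have h1 := Order.cof_le hcof
        have h2 : Order.cof ι = (Order.succ μ).ord.cof := Ordinal.cof_toType _
        rw [h2, (isRegular_succ hμ).cof_ord] at h1
        exact absurd (h1.trans (mk_range_le.trans hYcard)) (not_le.mpr (Order.lt_succ μ))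
      obtain ⟨α, hα⟩ := hbdd
      have hYprev : Y ⊆ ⋃ b : Set.Iio α, X b.1 := by
        intro y hy
        refine Set.mem_iUnion.mpr ⟨⟨idx ⟨y, hy⟩, hα _ ⟨⟨y, hy⟩, rfl⟩⟩, hidx ⟨y, hy⟩⟩
      have : w Y τ ∈ WS (⋃ b : Set.Iio α, X b.1) := wmem _ _ _ hYprev hYcard
      have : w Y τ ∈ X α := by rw [Xeq α]; exact Or.inr this
      exact Set.mem_iUnion.mpr ⟨α, this⟩
    -- the end-homogeneous sequence
    set a : ι → θ := WellFoundedLT.fix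
      (fun (α : ι) ih => w {x : θ | ∃ β : ι, ∃ h : β < α, x = ih β h}
        (typeFn {x : θ | ∃ β : ι, ∃ h : β < α, x = ih β h} zs)) with ha
    set Ya : ι → Set θ := fun α => {x : θ | ∃ β : ι, ∃ h : β < α, x = a β} with hYa
    have aeq : ∀ α : ι, a α = w (Ya α) (typeFn (Ya α) zs) :=
      fun α => WellFoundedLT.fix_eq _ α
    have Yacard : ∀ α : ι, #(Ya α) ≤ μ := by
      intro α
      have : Ya α ⊆ Set.range (fun b : Set.Iio α => a b.1) := by
        rintro x ⟨β, hβ, rfl⟩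
        exact ⟨⟨β, hβ⟩, rfl⟩
      exact (mk_le_mk_of_subset this).trans (mk_range_le.trans (mk_Iio_le α))
    have akey : ∀ α : ι, a α ∈ Xall ∧ a α ∉ Ya α ∧ typeFn (Ya α) (a α) = typeFn (Ya α) zs := by
      intro α
      induction α using WellFoundedLT.induction with
      | ind α ihα =>
        have hYsub : Ya α ⊆ Xall := by
          rintro x ⟨β, hβ, rfl⟩
          exact (ihα β hβ).1
        have hzsY : zs ∉ Ya α := fun h => hzs (hYsub h)
        have hspec := wspec (Ya α) (typeFn (Ya α) zs) zs hzsY rfl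
        refine ⟨?_, ?_, ?_⟩
        · rw [aeq α]; exact Ycl _ hYsub (Yacard α) _
        · rw [aeq α]; exact hspec.1
        · rw [aeq α]; exact hspec.2
    have ainj : Function.Injective a := by
      intro β γ h
      by_contra hne
      rcases lt_or_gt_of_ne hne with hlt | hlt
      · exact (akey γ).2.1 ⟨β, hlt, h.symm⟩
      · exact (akey β).2.1 ⟨γ, hlt, h⟩
    -- end homogeneity
    have endhom : ∀ (s : Finset ι) (α : ι), s.card = n + 1 → (∀ x ∈ s, x < α) →
        F (insert (a α) (s.image a)) = F (insert zs (s.image a)) := by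
      intro s α hcard hlt
      have htsub : ↑(s.image a) ⊆ Ya α := by
        intro x hx
        rw [Finset.coe_image] at hx
        obtain ⟨β, hβ, rfl⟩ := hx
        exact ⟨β, hlt β hβ, rfl⟩
      have htcard : (s.image a).card = n + 1 := by
        rw [Finset.card_image_of_injective _ ainj, hcard]
      set t : Finset θ := s.image a with hti
      set v : Fin (n+1) → (Ya α : Set θ) := fun j =>
        ⟨(t.equivFin.symm (Fin.cast htcard.symm j) : θ),
          htsub (t.equivFin.symm (Fin.cast htcard.symm j)).2⟩ with hv
      have hvim : Finset.image (fun j => (v j : θ)) Finset.univ = t := by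
        apply Finset.eq_of_subset_of_card_le
        · intro x hx
          rw [Finset.mem_image] at hx
          obtain ⟨j, _, rfl⟩ := hx
          exact (t.equivFin.symm (Fin.cast htcard.symm j)).2
        · rw [htcard]
          rw [Finset.card_image_of_injective _ ?_, Finset.card_univ, Fintype.card_fin]
          intro j k hjk
          have : t.equivFin.symm (Fin.cast htcard.symm j) =
              t.equivFin.symm (Fin.cast htcard.symm k) := Subtype.ext hjk
          have := t.equivFin.symm.injective this
          exact Fin.cast_injective _ this
      have := congrFun ((akey α).2.2) v
      rw [htypeFn] at this
      simp only at this
      rw [hvim] at this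
      exact this
    -- upper bounds for finite sets in ι
    have hub : ∀ u : Finset ι, ∃ α : ι, ∀ x ∈ u, x < α := by
      intro u
      obtain ⟨M, hM⟩ := Finset.exists_le u
      obtain ⟨α, hα⟩ := exists_gt M
      exact ⟨α, fun x hx => lt_of_le_of_lt (hM x hx) hα⟩
    set ubf : Finset ι → ι := fun u => (hub u).choose with hubf
    have hubf_spec : ∀ u : Finset ι, ∀ x ∈ u, x < ubf u := fun u => (hub u).choose_spec
    -- the induced coloring on ι
    set g : Finset ι → ξ := fun u => F (insert (a (ubf u)) (u.image a)) with hg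
    obtain ⟨H', hH'card, i, hom⟩ := IH ι g (by rw [hικ]; exact Order.lt_succ μ)
    refine ⟨a '' H', ?_, i, ?_⟩
    · rw [mk_image_eq ainj, hH'card]
    · intro s hs hcard
      have hsub : ∀ x ∈ s, x ∈ Set.range a := fun x hx => (hs hx).imp fun y hy => hy.2
      set t' : Finset ι := s.preimage a (ainj.injOn) with ht'
      have him : t'.image a = s := by
        rw [ht', Finset.image_preimage]
        apply Finset.filter_true_of_mem
        exact hsub
      have ht'sub : ↑t' ⊆ H' := by
        intro x hx
        rw [ht', Finset.mem_coe, Finset.mem_preimage] at hx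
        obtain ⟨y, hy, hxy⟩ := hs hx
        exact (ainj hxy).symm ▸ hy
      have ht'card : t'.card = n + 2 := by
        have := Finset.card_image_of_injective t' ainj
        rw [him] at this
        omega
      have ht'ne : t'.Nonempty := Finset.card_pos.mp (by omega)
      set α : ι := t'.max' ht'ne with hα
      set u : Finset ι := t'.erase α with hu
      have hucard : u.card = n + 1 := by
        rw [hu, Finset.card_erase_of_mem (t'.max'_mem ht'ne), ht'card]
        omega
      have husub : ↑u ⊆ H' := fun x hx => ht'sub (Finset.mem_of_mem_erase hx)
      have hlt : ∀ x ∈ u, x < α := by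
        intro x hx
        exact lt_of_le_of_ne (t'.le_max' x (Finset.mem_of_mem_erase hx))
          (Finset.ne_of_mem_erase hx)
      have h1 : F (insert (a α) (u.image a)) = F (insert zs (u.image a)) :=
        endhom u α hucard hlt
      have h2 : F (insert (a (ubf u)) (u.image a)) = F (insert zs (u.image a)) :=
        endhom u (ubf u) hucard (hubf_spec u)
      have h3 : g u = i := hom u husub hucard
      have h4 : insert (a α) (u.image a) = s := by
        rw [hu, ← Finset.image_insert, Finset.insert_erase (t'.max'_mem ht'ne), him]
      rw [← h4, h1, ← h2]
      exact h3

/-- Uncountable Hindman–Van der Waerden theorem. -/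
theorem stmt0 (l : Cardinal.{u}) (hl : ℵ₀ ≤ l) (c d : ℕ) (hc : 0 < c) (hd : 0 < d) :
    ∃ κ : Cardinal.{u}, l < κ ∧
      ∀ (G : Type u) [AddCommSemigroup G], #G = κ →
        ∀ f : G → Fin c, ∃ H : Set G, #H = l ∧
          ∃ a b : ℕ, 0 < a ∧ 0 < b ∧ ∃ i : Fin c,
            FSMono f {j | ∃ k ≤ d, j = a + k * b} H i := by
  classical
  obtain ⟨N, hN, hvdw⟩ := vdw_fin c d hc
  refine ⟨Order.succ (erc l (N - 1)), (le_erc l (N-1)).trans_lt (Order.lt_succ _), ?_⟩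
  intro G _ hG f
  have hlκ : l < Order.succ (erc l (N - 1)) := (le_erc l (N-1)).trans_lt (Order.lt_succ _)
  haveI hGne : Nonempty G := mk_ne_zero_iff.mp
    (by rw [hG]; exact (aleph0_pos.trans_le (hl.trans hlκ.le)).ne')
  set κ : Cardinal.{u} := Order.succ (erc l (N - 1)) with hκ
  set θ : Type u := κ.ord.ToType with hθdef
  haveI hθwo : IsWellOrder θ (· < ·) := isWellOrder_lt
  have hθcard : #θ = κ := by rw [hθdef, mk_toType, card_ord]
  have hGθ : Nonempty (G ≃ θ) := by rw [← Cardinal.eq, hG, hθcard]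
  obtain ⟨e⟩ := hGθ
  set sG : Finset θ → WithZero G := fun s => ∑ x ∈ s, ((e.symm x : G) : WithZero G) with hsG
  set realSum : Finset θ → G := fun s =>
    if h : ∃ g : G, sG s = (g : WithZero G) then h.choose else Classical.arbitrary G with hrS
  set firstk : Finset θ → ℕ → Finset θ :=
    fun s m => s.filter (fun x => (s.filter (· < x)).card < m) with hfk
  set ξ : Type u := ULift.{u} (Fin N → Fin c) with hξ
  set F : Finset θ → ξ := fun s => ⟨fun j => f (realSum (firstk s (j.1 + 1)))⟩ with hF
  obtain ⟨Hθ, hHθcard, i, hom⟩ := erdosRado l hl ξ (N - 1) θ F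
    (by rw [hθcard, hκ]; exact Order.lt_succ _)
  -- refine Hθ to an upward-large subset
  set T : Set θ := {x | x ∈ Hθ ∧ #(Hθ ∩ Set.Ioi x : Set θ) < l} with hT
  have hTcard : #T < l := by
    rcases Set.eq_empty_or_nonempty T with h | h
    · rw [h]; simpa using aleph0_pos.trans_le hl
    · obtain ⟨x₀, hx₀T, hmin⟩ := hθwo.wf.has_min T h
      have hsub : T ⊆ insert x₀ (Hθ ∩ Set.Ioi x₀) := by
        intro y hy
        rcases eq_or_ne y x₀ with rfl | hne
        · exact Set.mem_insert _ _
        · have : ¬ y < x₀ := hmin y hy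
          exact Set.mem_insert_of_mem _ ⟨hy.1, lt_of_le_of_ne (not_lt.mp this) (Ne.symm hne)⟩
      calc #T ≤ #(insert x₀ (Hθ ∩ Set.Ioi x₀) : Set θ) := mk_le_mk_of_subset hsub
      _ ≤ #(Hθ ∩ Set.Ioi x₀ : Set θ) + 1 := mk_insert_le
      _ < l := add_lt_of_lt hl hx₀T.2 (one_lt_aleph0.trans_le hl)
  set H₀ : Set θ := Hθ \ T with hH₀
  have hH₀sub : H₀ ⊆ Hθ := Set.diff_subset
  have hH₀card : #H₀ = l := by
    refine le_antisymm (hHθcard ▸ mk_le_mk_of_subset hH₀sub) ?_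
    by_contra hcon
    push_neg at hcon
    have hcover : Hθ ⊆ H₀ ∪ T := fun x hx => by
      by_cases hxT : x ∈ T
      · exact Or.inr hxT
      · exact Or.inl ⟨hx, hxT⟩
    have : l ≤ #H₀ + #T := by
      calc l = #Hθ := hHθcard.symm
      _ ≤ #(H₀ ∪ T : Set θ) := mk_le_mk_of_subset hcover
      _ ≤ #H₀ + #T := mk_union_le _ _
    exact absurd this (not_le.mpr (add_lt_of_lt hl hcon hTcard))
  have key : ∀ t : Finset θ, ↑t ⊆ H₀ → ∃ y ∈ H₀, ∀ x ∈ t, x < y := by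
    intro t ht
    rcases t.eq_empty_or_nonempty with rfl | hne
    · have : H₀.Nonempty := by
        rw [← Set.nonempty_coe_sort, ← mk_ne_zero_iff, hH₀card]
        exact (aleph0_pos.trans_le hl).ne'
      obtain ⟨y, hy⟩ := this
      exact ⟨y, hy, by simp⟩
    · set x₀ := t.max' hne with hx₀
      have hx₀H : x₀ ∈ H₀ := ht (t.max'_mem hne)
      have hbig : l ≤ #(Hθ ∩ Set.Ioi x₀ : Set θ) := not_lt.mp fun hcon => hx₀H.2 ⟨hx₀H.1, hcon⟩
      have hne2 : ((Hθ ∩ Set.Ioi x₀) \ T).Nonempty := by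
        rw [Set.sdiff_nonempty]
        intro hsub
        exact absurd (hbig.trans (mk_le_mk_of_subset hsub)) (not_le.mpr hTcard)
      obtain ⟨y, ⟨hyH, hyI⟩, hyT⟩ := hne2
      exact ⟨y, ⟨hyH, hyT⟩, fun x hx => lt_of_le_of_lt (t.le_max' x hx) hyI⟩
  have key2 : ∀ (m : ℕ) (t : Finset θ), ↑t ⊆ H₀ →
      ∃ u : Finset θ, ↑u ⊆ H₀ ∧ u.card = m ∧ ∀ x ∈ t, ∀ y ∈ u, x < y := by
    intro m
    induction m with
    | zero => exact fun t ht => ⟨∅, by simp, rfl, by simp⟩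
    | succ m ih =>
      intro t ht
      obtain ⟨u, hu1, hu2, hu3⟩ := ih t ht
      obtain ⟨y, hy, hylt⟩ := key (t ∪ u) (by
        rw [Finset.coe_union]
        exact Set.union_subset ht hu1)
      have hyu : y ∉ u := fun hmem => absurd (hylt y (Finset.mem_union_right _ hmem)) (lt_irrefl y)
      refine ⟨insert y u, ?_, ?_, ?_⟩
      · rw [Finset.coe_insert]
        exact Set.insert_subset hy hu1
      · rw [Finset.card_insert_of_notMem hyu, hu2]
      · intro x hx z hz
        rcases Finset.mem_insert.mp hz with rfl | hz
        · exact hylt x (Finset.mem_union_left _ hx)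
        · exact hu3 x hx z hz
  refine ⟨e.symm '' H₀, by rw [mk_image_eq e.symm.injective, hH₀card], ?_⟩
  set χ : ℕ → Fin c := fun j => if h : j - 1 < N then i.down ⟨j-1, h⟩ else i.down ⟨0, hN⟩ with hχ
  obtain ⟨aa, bb, haa, hbb, habN, i₀, hAP⟩ := hvdw χ
  refine ⟨aa, bb, haa, hbb, i₀, ?_⟩
  intro m hm g hginj hgmem
  obtain ⟨k, hk, hmk⟩ := hm
  have hjN : m + 1 ≤ N := by
    have h1 : k * bb ≤ d * bb := Nat.mul_le_mul_right bb hk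
    omega
  have hmN : m < N := by omega
  set t : Finset θ := Finset.image (fun j => e (g j)) Finset.univ with ht
  have heginj : Function.Injective (fun j => e (g j)) := fun x y h => hginj (e.injective h)
  have htcard : t.card = m + 1 := by
    rw [ht, Finset.card_image_of_injective _ heginj, Finset.card_univ, Fintype.card_fin]
  have htsub : ↑t ⊆ H₀ := by
    intro x hx
    rw [ht, Finset.coe_image] at hx
    obtain ⟨j, _, rfl⟩ := hx
    obtain ⟨y, hy, hyg⟩ := hgmem j
    show e (g j) ∈ H₀
    rw [← hyg, Equiv.apply_symm_apply]
    exact hy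
  obtain ⟨u, hu1, hu2, hu3⟩ := key2 (N - (m+1)) t htsub
  set s : Finset θ := t ∪ u with hs
  have hdisj : Disjoint t u := by
    rw [Finset.disjoint_left]
    intro x hx hxu
    exact absurd (hu3 x hx x hxu) (lt_irrefl x)
  have hscard : s.card = N := by
    rw [hs, Finset.card_union_of_disjoint hdisj, htcard, hu2]
    omega
  have hssub : ↑s ⊆ Hθ := by
    rw [hs, Finset.coe_union]
    exact Set.union_subset (htsub.trans hH₀sub) (hu1.trans hH₀sub)
  have hFs : F s = i := hom s hssub (by rw [hscard]; omega)
  have hfirst : firstk s (m+1) = t := by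
    rw [hfk]
    ext x
    simp only [Finset.mem_filter]
    constructor
    · rintro ⟨hxs, hxc⟩
      by_contra hxt
      have hxu : x ∈ u := by
        rcases Finset.mem_union.mp hxs with h | h
        · exact absurd h hxt
        · exact h
      have : t ⊆ s.filter (· < x) := by
        intro y hy
        rw [Finset.mem_filter]
        exact ⟨Finset.mem_union_left _ hy, hu3 y hy x hxu⟩
      have := Finset.card_le_card this
      rw [htcard] at this
      omega
    · intro hxt
      refine ⟨Finset.mem_union_left _ hxt, ?_⟩
      have : s.filter (· < x) ⊆ t.erase x := by
        intro y hy
        rw [Finset.mem_filter] at hy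
        obtain ⟨hys, hyx⟩ := hy
        rcases Finset.mem_union.mp hys with h | h
        · exact Finset.mem_erase.mpr ⟨ne_of_lt hyx, h⟩
        · exact absurd (hu3 x hxt y h) (asymm hyx)
      have := Finset.card_le_card this
      rw [Finset.card_erase_of_mem hxt, htcard] at this
      omega
  have hsGt : sG t = ((tupSum g : G) : WithZero G) := by
    rw [hsG, ht]
    simp only
    rw [Finset.sum_image (fun x _ y _ h => heginj h)]
    rw [coe_tupSum]
    apply Finset.sum_congr rfl
    intro j _
    rw [Equiv.symm_apply_apply]
  have hsum : realSum t = tupSum g := by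
    rw [hrS]
    simp only
    have hex : ∃ gg : G, sG t = (gg : WithZero G) := ⟨tupSum g, hsGt⟩
    rw [dif_pos hex]
    have hcs := hex.choose_spec
    exact WithZero.coe_inj.mp (hcs.symm.trans hsGt)
  have hcomp : f (realSum (firstk s (m+1))) = i.down ⟨m, hmN⟩ := by
    have := congrArg ULift.down hFs
    have := congrFun this ⟨m, hmN⟩
    exact this
  rw [hfirst, hsum] at hcomp
  have hχm : χ (m + 1) = i.down ⟨m, hmN⟩ := by
    rw [hχ]
    simp only
    rw [dif_pos (show m + 1 - 1 < N by omega)]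
    simp only [Nat.add_sub_cancel]
  have := hAP k hk
  rw [← hmk] at this
  rw [hcomp, ← hχm, this]
end
end

section
/- For every infinite cardinal λ and every positive integer c, there exists a cardinal κ > λ such that for every commutative semigroup (G,+) of cardinality κ and every coloring f : G → c, there exist a subset H ⊆ G of cardinality λ and positive integers a, b such that all sums of a-many distinct elements of H, all sums of b-many distinct elements of H, and all sums of (a+b)-many distinct elements of H have the same color under f. -/
open Cardinal

universe u

universe v

set_option linter.unusedSectionVars false

namespace HSAux

attribute [local instance] Classical.propDecidable

theorem triangle (c : ℕ) : ∃ M : ℕ, ∀ V : Finset ℕ, M ≤ V.card → ∀ χ : ℕ → ℕ → Fin c,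
    ∃ i ∈ V, ∃ j ∈ V, ∃ k ∈ V, i < j ∧ j < k ∧ χ i j = χ j k ∧ χ i k = χ j k := by
  induction c with
  | zero => exact ⟨0, fun V _ χ => (χ 0 0).elim0⟩
  | succ c ih =>
    rcases Nat.eq_zero_or_pos c with hc0 | hcpos
    · subst hc0
      refine ⟨3, fun V hV χ => ?_⟩
      have h1 : V.Nonempty := Finset.card_pos.mp (by omega)
      set x := V.min' h1 with hx
      have hxV : x ∈ V := V.min'_mem h1
      set V1 := V.erase x with hV1
      have hV1c : 2 ≤ V1.card := by
        rw [hV1, Finset.card_erase_of_mem hxV]; omega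
      have h2 : V1.Nonempty := Finset.card_pos.mp (by omega)
      set y := V1.min' h2 with hy
      have hyV1 : y ∈ V1 := V1.min'_mem h2
      set V2 := V1.erase y with hV2
      have hV2c : 1 ≤ V2.card := by
        rw [hV2, Finset.card_erase_of_mem hyV1]; omega
      have h3 : V2.Nonempty := Finset.card_pos.mp (by omega)
      set z := V2.min' h3 with hz
      have hzV2 : z ∈ V2 := V2.min'_mem h3
      have hzV1 : z ∈ V1 := Finset.mem_of_mem_erase hzV2
      have hyV : y ∈ V := Finset.mem_of_mem_erase hyV1
      have hzV : z ∈ V := Finset.mem_of_mem_erase hzV1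
      have hxy : x < y := lt_of_le_of_ne (V.min'_le y hyV) (Finset.ne_of_mem_erase hyV1).symm
      have hyz : y < z := lt_of_le_of_ne (V1.min'_le z hzV1) (Finset.ne_of_mem_erase hzV2).symm
      have hall : ∀ u w : Fin (0 + 1), u = w := fun u w => Fin.ext (by omega)
      exact ⟨x, hxV, y, hyV, z, hzV, hxy, hyz, hall _ _, hall _ _⟩
    · obtain ⟨M, hM⟩ := ih
      refine ⟨(c + 1) * M + 2, fun V hV χ => ?_⟩
      have h1 : V.Nonempty := Finset.card_pos.mp (by omega)
      set v := V.max' h1 with hv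
      have hvV : v ∈ V := V.max'_mem h1
      set V' := V.erase v with hV'
      have hV'c : (c + 1) * M + 1 ≤ V'.card := by
        rw [hV', Finset.card_erase_of_mem hvV]; omega
      have hpig : ∃ i : Fin (c + 1), M + 1 ≤ (V'.filter (fun x => χ x v = i)).card := by
        by_contra h
        push_neg at h
        have hsum := Finset.card_eq_sum_card_fiberwise
          (f := fun x => χ x v) (s := V') (t := Finset.univ) (fun x _ => Finset.mem_univ _)
        beta_reduce at hsum
        have hle : ∑ i : Fin (c + 1), (V'.filter (fun x => χ x v = i)).card
            ≤ ∑ _i : Fin (c + 1), M :=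
          Finset.sum_le_sum (fun i _ => by have := h i; omega)
        rw [Finset.sum_const, Finset.card_univ, Fintype.card_fin, smul_eq_mul] at hle
        omega
      obtain ⟨i, hi⟩ := hpig
      set Y := V'.filter (fun x => χ x v = i) with hY
      have hYV' : Y ⊆ V' := Finset.filter_subset _ _
      have hYV : Y ⊆ V := hYV'.trans (Finset.erase_subset _ _)
      have hYlt : ∀ x ∈ Y, x < v := by
        intro x hx
        exact lt_of_le_of_ne (V.le_max' x (hYV hx)) (Finset.ne_of_mem_erase (hYV' hx))
      have hYi : ∀ x ∈ Y, χ x v = i := by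
        intro x hx
        exact (Finset.mem_filter.mp hx).2
      by_cases hE : ∃ x ∈ Y, ∃ y ∈ Y, x < y ∧ χ x y = i
      · obtain ⟨x, hx, y, hy, hxy, hc⟩ := hE
        refine ⟨x, hYV hx, y, hYV hy, v, hvV, hxy, hYlt y hy, ?_, ?_⟩
        · rw [hc, hYi y hy]
        · rw [hYi x hx, hYi y hy]
      · push_neg at hE
        have hg : ∃ g : Fin (c + 1) → Fin c,
            ∀ z w : Fin (c + 1), z ≠ i → w ≠ i → g z = g w → z = w := by
          refine ⟨fun z => if h : z.val < i.val then ⟨z.val, by omega⟩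
            else ⟨z.val - 1, by have := z.isLt; omega⟩, ?_⟩
          intro z w hz hw hgzw
          have hz' : z.val ≠ i.val := fun h => hz (Fin.ext h)
          have hw' : w.val ≠ i.val := fun h => hw (Fin.ext h)
          have hiz := i.isLt
          apply Fin.ext
          by_cases h1 : z.val < i.val <;> by_cases h2 : w.val < i.val <;>
            simp [h1, h2, Fin.mk.injEq] at hgzw <;> omega
        obtain ⟨g, hginj⟩ := hg
        obtain ⟨x, hx, y, hy, z, hz, hxy, hyz, he1, he2⟩ :=
          hM Y (by omega) (fun a b => g (χ a b))
        have hne1 : χ x y ≠ i := hE x hx y hy hxy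
        have hne2 : χ y z ≠ i := hE y hy z hz hyz
        have hne3 : χ x z ≠ i := hE x hx z hz (hxy.trans hyz)
        exact ⟨x, hYV hx, y, hYV hy, z, hYV hz, hxy, hyz,
          hginj _ _ hne1 hne2 he1, hginj _ _ hne3 hne2 he2⟩

theorem schur (c : ℕ) : ∃ n : ℕ, ∀ d : ℕ → Fin c,
    ∃ a b : ℕ, 0 < a ∧ 0 < b ∧ a + b ≤ n + 1 ∧ d a = d b ∧ d (a + b) = d a := by
  obtain ⟨M, hM⟩ := triangle c
  refine ⟨M, fun d => ?_⟩
  obtain ⟨i, hi, j, hj, k, hk, hij, hjk, h1, h2⟩ :=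
    hM (Finset.range (M + 1)) (by simp) (fun x y => d (y - x))
  rw [Finset.mem_range] at hi hj hk
  refine ⟨j - i, k - j, by omega, by omega, by omega, h1, ?_⟩
  have h3 : (j - i) + (k - j) = k - i := by omega
  rw [h3, h2, ← h1]


section EndHom

variable {α ι : Type u} [LinearOrder α] [WellFoundedLT α]
variable {W : Type u} [LinearOrder W] [WellFoundedLT W]

def candSet (n : ℕ) (f : Finset α → ι) (a : α) (prev : Set α) : Set α :=
  {p | p = a ∨ (p ∉ prev ∧ ∀ s : Finset α, ↑s ⊆ prev → s.card = n →
    f (insert p s) = f (insert a s))}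

lemma self_mem_candSet (n : ℕ) (f : Finset α → ι) (a : α) (prev : Set α) :
    a ∈ candSet n f a prev := Or.inl rfl

noncomputable def stepEl (n : ℕ) (f : Finset α → ι) (a : α) (prev : Set α) : α :=
  wellFounded_lt.min (candSet n f a prev) ⟨a, self_mem_candSet n f a prev⟩

lemma stepEl_mem (n : ℕ) (f : Finset α → ι) (a : α) (prev : Set α) :
    stepEl n f a prev ∈ candSet n f a prev :=
  WellFounded.min_mem _ _ _

lemma stepEl_le (n : ℕ) (f : Finset α → ι) (a : α) (prev : Set α) {p : α}
    (hp : p ∈ candSet n f a prev) : stepEl n f a prev ≤ p :=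
  not_lt.mp (WellFounded.not_lt_min _ _ hp)

lemma stepEl_congr (n : ℕ) (f : Finset α → ι) (a b : α) {P Q : Set α} (h : P = Q)
    (hc : candSet n f a P = candSet n f b Q) : stepEl n f a P = stepEl n f b Q := by
  subst h
  unfold stepEl
  congr 1

noncomputable def seqEl (n : ℕ) (f : Finset α → ι) (a : α) : W → α :=
  WellFounded.fix wellFounded_lt
    (fun w ih => stepEl n f a {x | ∃ w', ∃ h : w' < w, ih w' h = x})

def imgEl (n : ℕ) (f : Finset α → ι) (a : α) (w : W) : Set α :=
  seqEl n f a '' Set.Iio w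

lemma seqEl_eq (n : ℕ) (f : Finset α → ι) (a : α) (w : W) :
    seqEl n f a w = stepEl n f a (imgEl n f a w) := by
  have hdef : seqEl (W := W) n f a = WellFounded.fix wellFounded_lt
      (fun w ih => stepEl n f a {x | ∃ w', ∃ h : w' < w, ih w' h = x}) := rfl
  conv_lhs => rw [hdef, WellFounded.fix_eq]
  congr 1
  ext x
  simp only [Set.mem_setOf_eq, imgEl, Set.mem_image, Set.mem_Iio]
  constructor
  · rintro ⟨w', h, hx⟩
    exact ⟨w', h, by rw [← hx, hdef]⟩
  · rintro ⟨w', h, hx⟩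
    exact ⟨w', h, by rw [hdef] at hx; exact hx⟩

lemma seqEl_mem_cand (n : ℕ) (f : Finset α → ι) (a : α) (w : W) :
    seqEl n f a w ∈ candSet n f a (imgEl n f a w) := by
  rw [seqEl_eq]; exact stepEl_mem n f a _

lemma imgEl_mono (n : ℕ) (f : Finset α → ι) (a : α) {w w' : W} (h : w' ≤ w) :
    imgEl n f a w' ⊆ imgEl n f a w :=
  Set.image_mono (fun _ hx => lt_of_lt_of_le hx h)

lemma candSet_anti (n : ℕ) (f : Finset α → ι) (a : α) {P Q : Set α} (h : P ⊆ Q) :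
    candSet n f a Q ⊆ candSet n f a P := by
  rintro p (rfl | ⟨hp1, hp2⟩)
  · exact Or.inl rfl
  · exact Or.inr ⟨fun hip => hp1 (h hip), fun s hs hcard => hp2 s (fun x hx => h (hs hx)) hcard⟩

lemma seqEl_lt_seqEl (n : ℕ) (f : Finset α → ι) (a : α) {w' w : W} (hlt : w' < w)
    (hne : seqEl n f a w' ≠ a) : seqEl (W := W) n f a w' < seqEl n f a w := by
  have h1 : seqEl n f a w ∈ candSet n f a (imgEl n f a w') :=
    candSet_anti n f a (imgEl_mono n f a hlt.le) (seqEl_mem_cand n f a w)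
  have h2 : seqEl n f a w' ≤ seqEl n f a w := by
    rw [seqEl_eq n f a w']
    exact stepEl_le n f a _ h1
  rcases h2.lt_or_eq with h | h
  · exact h
  · exfalso
    have h3 : seqEl n f a w ∈ imgEl n f a w := ⟨w', hlt, h.symm ▸ rfl⟩
    rcases seqEl_mem_cand n f a w with h4 | ⟨h4, _⟩
    · exact hne (h ▸ h4)
    · exact h4 h3

/-- Key lemma: end-homogeneous set extraction. -/
theorem endHom (κ : Cardinal.{u}) (hκ : ℵ₀ ≤ κ) (hι : #ι ≤ κ) (hα : 2 ^ κ < #α)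
    (n : ℕ) (f : Finset α → ι) :
    ∃ (C : Set α) (a : α), κ < #C ∧
      ∀ q ∈ C, ∀ s : Finset α, ↑s ⊆ C → s.card = n → (∀ x ∈ s, x < q) →
        f (insert q s) = f (insert a s) := by
  set W : Type u := (Order.succ κ).ord.ToType with hWdef
  have hW : #W = Order.succ κ := by rw [hWdef, mk_toType, card_ord]
  by_cases hA : ∃ a : α, ∀ w : W, seqEl n f a w ≠ a
  · obtain ⟨a, ha⟩ := hA
    have hmono : StrictMono (seqEl (W := W) n f a) := by
      intro w' w hlt
      exact seqEl_lt_seqEl n f a hlt (ha w')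
    refine ⟨Set.range (seqEl (W := W) n f a), a, ?_, ?_⟩
    · rw [mk_range_eq _ hmono.injective, hW]
      exact Order.lt_succ κ
    · rintro q ⟨w, rfl⟩ s hs hcard hlt
      have hsub : ↑s ⊆ imgEl n f a w := by
        intro x hx
        obtain ⟨w', rfl⟩ := hs hx
        have hlt2 : seqEl n f a w' < seqEl n f a w := hlt _ hx
        exact ⟨w', hmono.lt_iff_lt.mp hlt2, rfl⟩
      rcases seqEl_mem_cand n f a w with h | ⟨_, h⟩
      · exact absurd h (ha w)
      · exact h s hsub hcard
  · exfalso
    push_neg at hA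
    -- termination stage
    have hterm : ∀ a : α, {w : W | seqEl n f a w = a}.Nonempty := fun a => hA a
    set θ : α → W := fun a => wellFounded_lt.min {w : W | seqEl n f a w = a} (hterm a)
      with hθdef
    have hθ : ∀ a, seqEl n f a (θ a) = a := fun a =>
      WellFounded.min_mem wellFounded_lt {w : W | seqEl n f a w = a} (hterm a)
    have hθmin : ∀ a (w : W), w < θ a → seqEl n f a w ≠ a := by
      intro a w hw h
      exact WellFounded.not_lt_min wellFounded_lt {w : W | seqEl n f a w = a} h hw
    have hnotin : ∀ a (w : W), w ≤ θ a → a ∉ imgEl n f a w := by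
      rintro a w hw ⟨w', hw', h⟩
      exact hθmin a w' (lt_of_lt_of_le hw' hw) h
    -- the injective invariant
    set Φ : α → W × (Finset W → Option ι) := fun a =>
      (θ a, fun t => if ∀ x ∈ t, x < θ a then some (f (insert a (t.image (seqEl n f a))))
        else none) with hΦdef
    have hΦinj : Function.Injective Φ := by
      intro a b hab
      have h1 : θ a = θ b := congrArg Prod.fst hab
      have h2 : ∀ t : Finset W, (∀ x ∈ t, x < θ a) →
          f (insert a (t.image (seqEl n f a))) = f (insert b (t.image (seqEl n f b))) := by
        intro t ht
        have := congrFun (congrArg Prod.snd hab) t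
        simp only [hΦdef] at this
        rw [if_pos ht, if_pos (h1 ▸ ht)] at this
        exact Option.some.inj this
      have key : ∀ w : W, w ≤ θ a → seqEl n f a w = seqEl n f b w := by
        intro w
        induction w using WellFoundedLT.induction with
        | ind w ih =>
        intro hw
        have himg : imgEl n f a w = imgEl n f b w := by
          unfold imgEl
          ext x
          simp only [Set.mem_image, Set.mem_Iio]
          constructor
          · rintro ⟨w', hw', rfl⟩
            exact ⟨w', hw', (ih w' hw' (le_of_lt (lt_of_lt_of_le hw' hw))).symm⟩
          · rintro ⟨w', hw', rfl⟩
            exact ⟨w', hw', ih w' hw' (le_of_lt (lt_of_lt_of_le hw' hw))⟩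
        have htrans : ∀ s : Finset α, ↑s ⊆ imgEl n f a w → s.card = n →
            f (insert a s) = f (insert b s) := by
          intro s hs hcard
          have hchoice : ∀ y : {y // y ∈ s}, ∃ w' : W, w' < w ∧ seqEl n f a w' = y.1 := by
            rintro ⟨y, hy⟩
            obtain ⟨w', hw', h⟩ := hs hy
            exact ⟨w', hw', h⟩
          choose wit hwit1 hwit2 using hchoice
          set t : Finset W := s.attach.image wit with htdef
          have ht : ∀ x ∈ t, x < θ a := by
            intro x hx
            simp only [htdef, Finset.mem_image, Finset.mem_attach, true_and] at hx
            obtain ⟨y, rfl⟩ := hx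
            exact lt_of_lt_of_le (hwit1 y) hw
          have hta : t.image (seqEl n f a) = s := by
            rw [htdef, Finset.image_image]
            ext z
            simp only [Finset.mem_image, Finset.mem_attach, true_and, Function.comp_apply]
            constructor
            · rintro ⟨y, rfl⟩
              rw [hwit2 y]; exact y.2
            · intro hz
              exact ⟨⟨z, hz⟩, hwit2 ⟨z, hz⟩⟩
          have htb : t.image (seqEl n f b) = s := by
            rw [htdef, Finset.image_image]
            ext z
            simp only [Finset.mem_image, Finset.mem_attach, true_and, Function.comp_apply]
            constructor
            · rintro ⟨y, rfl⟩
              rw [← ih (wit y) (hwit1 y) (le_of_lt (lt_of_lt_of_le (hwit1 y) hw)), hwit2 y]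
              exact y.2
            · intro hz
              refine ⟨⟨z, hz⟩, ?_⟩
              rw [← ih (wit ⟨z, hz⟩) (hwit1 ⟨z, hz⟩)
                (le_of_lt (lt_of_lt_of_le (hwit1 ⟨z, hz⟩) hw)), hwit2 ⟨z, hz⟩]
          calc f (insert a s) = f (insert a (t.image (seqEl n f a))) := by rw [hta]
            _ = f (insert b (t.image (seqEl n f b))) := h2 t ht
            _ = f (insert b s) := by rw [htb]
        have hcand : candSet n f a (imgEl n f a w) = candSet n f b (imgEl n f b w) := by
          rw [← himg]
          ext p
          unfold candSet
          simp only [Set.mem_setOf_eq]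
          constructor
          · rintro (heq | ⟨hp1, hp2⟩)
            · refine Or.inr ⟨heq ▸ hnotin a w hw, fun s hs hcard => ?_⟩
              rw [heq]
              exact htrans s hs hcard
            · exact Or.inr ⟨hp1, fun s hs hcard => (hp2 s hs hcard).trans (htrans s hs hcard)⟩
          · rintro (heq | ⟨hp1, hp2⟩)
            · refine Or.inr ⟨?_, fun s hs hcard => ?_⟩
              · rw [heq, himg]
                exact hnotin b w (h1 ▸ hw)
              · rw [heq]
                exact (htrans s hs hcard).symm
            · exact Or.inr ⟨hp1, fun s hs hcard =>
                (hp2 s hs hcard).trans (htrans s hs hcard).symm⟩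
        rw [seqEl_eq, seqEl_eq]
        exact stepEl_congr n f a b himg (himg ▸ hcand)
      have := key (θ a) le_rfl
      rw [hθ a] at this
      rw [this, h1, hθ b]
    -- counting
    have hcount : #α ≤ 2 ^ κ := by
      have hinj2 : #α ≤ #(Σ w : W, ({t : Finset W // ∀ x ∈ t, x < w} → Option ι)) := by
        have h0 : #α = #(Set.range Φ) := (mk_range_eq _ hΦinj).symm
        rw [h0]
        refine mk_le_of_injective (f := fun p =>
          (⟨p.1.1, fun t => p.1.2 t.1⟩ : Σ w : W, ({t : Finset W // ∀ x ∈ t, x < w} → Option ι)))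
          ?_
        rintro ⟨⟨w, F⟩, hF⟩ ⟨⟨w', F'⟩, hF'⟩ h
        obtain ⟨h1, h2⟩ := Sigma.mk.inj_iff.mp h
        subst h1
        rw [heq_iff_eq] at h2
        obtain ⟨a, ha⟩ := hF
        obtain ⟨b, hb⟩ := hF'
        have hwa : θ a = w := congrArg Prod.fst ha
        have hwb : θ b = w := congrArg Prod.fst hb
        have hFa : F = fun t => if ∀ x ∈ t, x < w then
            some (f (insert a (t.image (seqEl n f a)))) else none := by
          rw [← hwa]; exact (congrArg Prod.snd ha).symm
        have hFb : F' = fun t => if ∀ x ∈ t, x < w then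
            some (f (insert b (t.image (seqEl n f b)))) else none := by
          rw [← hwb]; exact (congrArg Prod.snd hb).symm
        have : F = F' := by
          funext t
          by_cases ht : ∀ x ∈ t, x < w
          · exact congrFun h2 ⟨t, ht⟩
          · rw [hFa, hFb]
            simp only [if_neg ht]
        apply Subtype.ext
        rw [Prod.ext_iff]
        exact ⟨rfl, this⟩
      refine hinj2.trans ?_
      rw [mk_sigma]
      have hbound : ∀ w : W, #({t : Finset W // ∀ x ∈ t, x < w} → Option ι) ≤ 2 ^ κ := by
        intro w
        have h1 : #{t : Finset W // ∀ x ∈ t, x < w} ≤ κ := by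
          have hi : Function.Injective
              (fun t : {t : Finset W // ∀ x ∈ t, x < w} =>
                (t.1.subtype (fun x => x ∈ Set.Iio w))) := by
            rintro ⟨t, ht⟩ ⟨t', ht'⟩ h
            apply Subtype.ext
            have := congrArg (Finset.map (Function.Embedding.subtype _)) h
            simp only [Finset.subtype_map] at this
            rw [Finset.filter_true_of_mem (fun x hx => Set.mem_Iio.mpr (ht x hx)),
              Finset.filter_true_of_mem (fun x hx => Set.mem_Iio.mpr (ht' x hx))] at this
            exact this
          refine (mk_le_of_injective hi).trans ?_
          have h2 : #(Set.Iio w) ≤ κ := by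
            have := mk_Iio_ord_toType (c := Order.succ κ) w
            exact Order.lt_succ_iff.mp this
          by_cases hfin : Finite (Set.Iio w)
          · haveI := Fintype.ofFinite (↥(Set.Iio w))
            exact (le_of_lt (lt_aleph0_of_finite (Finset (Set.Iio w)))).trans hκ
          · rw [not_finite_iff_infinite] at hfin
            rw [mk_finset_of_infinite]
            exact h2
        have h2 : #(Option ι) ≤ κ := by
          rw [mk_option]
          calc #ι + 1 ≤ κ + 1 := add_le_add_left hι 1
            _ = κ := by
              exact add_one_eq hκ
        calc #({t : Finset W // ∀ x ∈ t, x < w} → Option ι)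
            = #(Option ι) ^ #{t : Finset W // ∀ x ∈ t, x < w} := by
              rw [← power_def]
          _ ≤ κ ^ κ := by
              refine (power_le_power_right h2).trans (power_le_power_left ?_ h1)
              exact fun h0 => (by rw [h0] at hκ; exact (aleph0_pos).not_ge hκ)
          _ = 2 ^ κ := power_self_eq hκ
      calc (sum fun w : W => #({t : Finset W // ∀ x ∈ t, x < w} → Option ι))
          ≤ sum fun _ : W => 2 ^ κ := sum_le_sum _ _ hbound
        _ = #W * 2 ^ κ := sum_const' _ _
        _ ≤ 2 ^ κ * 2 ^ κ := by
            refine mul_le_mul' ?_ le_rfl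
            rw [hW]
            exact Order.succ_le_iff.mpr (cantor κ)
        _ = 2 ^ κ := mul_eq_self (hκ.trans (le_of_lt (cantor κ)))
    exact absurd hcount (not_le.mpr hα)

end EndHom

/-- Iterated powers above `ν`. -/
def bethA (ν : Cardinal.{u}) : ℕ → Cardinal.{u}
  | 0 => ν
  | k + 1 => 2 ^ bethA ν k

lemma le_bethA (ν : Cardinal.{u}) (k : ℕ) : ν ≤ bethA ν k := by
  induction k with
  | zero => exact le_rfl
  | succ k ih => exact ih.trans (le_of_lt (cantor _))

lemma aleph0_le_bethA {ν : Cardinal.{u}} (hν : ℵ₀ ≤ ν) (k : ℕ) : ℵ₀ ≤ bethA ν k :=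
  hν.trans (le_bethA ν k)

/-- The Erdős–Rado theorem. -/
theorem erdosRado : ∀ (n : ℕ) (ν : Cardinal.{u}), ℵ₀ ≤ ν →
    ∀ (α : Type u) [LinearOrder α] [WellFoundedLT α] (ι : Type u), #ι ≤ ν →
    bethA ν n < #α → ∀ f : Finset α → ι,
    ∃ (H : Set α) (i : ι), ν < #H ∧ ∀ s : Finset α, ↑s ⊆ H → s.card = n + 1 → f s = i := by
  intro n
  induction n with
  | zero =>
    intro ν hν α _ _ ι hι hα f
    have hfib : ∃ i : ι, ν < #((fun x : α => f {x}) ⁻¹' {i}) := by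
      by_contra h
      push_neg at h
      have h1 : #α = sum fun i : ι => #((fun x : α => f {x}) ⁻¹' {i}) := by
        rw [← mk_sigma]
        exact mk_congr (Equiv.sigmaFiberEquiv _).symm
      have h2 : #α ≤ #ι * ν := by
        rw [h1]
        calc (sum fun i : ι => #((fun x : α => f {x}) ⁻¹' {i}))
            ≤ sum fun _ : ι => ν := sum_le_sum _ _ h
          _ = #ι * ν := sum_const' _ _
      have h3 : #ι * ν ≤ ν := by
        calc #ι * ν ≤ ν * ν := mul_le_mul' hι le_rfl
          _ = ν := mul_eq_self hν
      exact absurd hα (not_lt.mpr (h2.trans h3))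
    obtain ⟨i, hi⟩ := hfib
    refine ⟨_, i, hi, ?_⟩
    intro s hs hcard
    obtain ⟨x, rfl⟩ := Finset.card_eq_one.mp hcard
    have := hs (Finset.mem_singleton_self x)
    exact this
  | succ n ih =>
    intro ν hν α _ _ ι hι hα f
    have hκs : ℵ₀ ≤ bethA ν n := aleph0_le_bethA hν n
    have hι' : #ι ≤ bethA ν n := hι.trans (le_bethA ν n)
    obtain ⟨C, a, hC, hEnd⟩ := endHom (bethA ν n) hκs hι' hα (n + 1) f
    -- coloring of (n+1)-subsets of C
    set g : Finset C → ι := fun t => f (insert a (t.map (Function.Embedding.subtype _)))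
      with hgdef
    have hC' : bethA ν n < #C := hC
    obtain ⟨H₀, i, hH₀, hhom₀⟩ := ih ν hν (↥C) ι hι hC' g
    refine ⟨Subtype.val '' H₀, i, ?_, ?_⟩
    · rwa [mk_image_eq Subtype.val_injective]
    · intro s hs hcard
      have hsC : ↑s ⊆ C := by
        intro x hx
        obtain ⟨y, _, rfl⟩ := hs hx
        exact y.2
      have hne : s.Nonempty := Finset.card_pos.mp (by omega)
      set q := s.max' hne with hq
      have hqs : q ∈ s := s.max'_mem hne
      set s' := s.erase q with hs'
      have hs'card : s'.card = n + 1 := by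
        rw [hs', Finset.card_erase_of_mem hqs, hcard]
        omega
      have hs'sub : ↑s' ⊆ C := fun x hx => hsC (Finset.erase_subset _ _ hx)
      have hs'lt : ∀ x ∈ s', x < q := by
        intro x hx
        exact lt_of_le_of_ne (s.le_max' x (Finset.mem_of_mem_erase hx))
          (Finset.ne_of_mem_erase hx)
      have h1 : f s = f (insert q s') := by rw [hs', Finset.insert_erase hqs]
      have h2 : f (insert q s') = f (insert a s') := hEnd q (hsC hqs) s' hs'sub hs'card hs'lt
      -- express via g
      set t' : Finset C := s'.subtype (· ∈ C) with ht'
      have ht'map : t'.map (Function.Embedding.subtype _) = s' := by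
        rw [ht', Finset.subtype_map]
        exact Finset.filter_true_of_mem (fun x hx => hs'sub hx)
      have h3 : f (insert a s') = g t' := by
        show f (insert a s') = f (insert a (t'.map (Function.Embedding.subtype _)))
        rw [ht'map]
      have ht'sub : ↑t' ⊆ H₀ := by
        rintro ⟨x, hxC⟩ hx
        have hxs' : x ∈ s' := by
          have := Finset.mem_subtype.mp hx
          exact this
        obtain ⟨z, hz, hzx⟩ := hs (Finset.erase_subset _ _ hxs')
        have : z = ⟨x, hxC⟩ := Subtype.ext hzx
        exact this ▸ hz
      have ht'card : t'.card = n + 1 := by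
        rw [ht', Finset.card_subtype, Finset.filter_true_of_mem (fun x hx => hs'sub hx)]
        exact hs'card
      rw [h1, h2, h3]
      exact hhom₀ t' ht'sub ht'card

/-- `G` with an adjoined zero element, as a commutative monoid. -/
def AdjZ (G : Type u) : Type u := Option G

variable {G : Type u} [AddCommSemigroup G]

def oadd : AdjZ G → AdjZ G → AdjZ G
  | Option.none, y => y
  | Option.some a, Option.none => Option.some a
  | Option.some a, Option.some b => Option.some (a + b)

instance : Zero (AdjZ G) := ⟨(Option.none : Option G)⟩
instance : Add (AdjZ G) := ⟨oadd⟩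

instance : AddCommMonoid (AdjZ G) where
  add_assoc a b c := by
    rcases a with _ | a <;> rcases b with _ | b <;> rcases c with _ | c <;>
      simp only [oadd, HAdd.hAdd, Add.add] <;> try rfl
    exact congrArg Option.some (add_assoc a b c)
  zero_add a := by rcases a with _ | a <;> rfl
  add_zero a := by rcases a with _ | a <;> rfl
  add_comm a b := by
    rcases a with _ | a <;> rcases b with _ | b <;>
      simp only [oadd, HAdd.hAdd, Add.add] <;> try rfl
    exact congrArg Option.some (add_comm a b)
  nsmul := nsmulRec
  nsmul_zero := fun _ => rfl
  nsmul_succ := fun _ _ => rfl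

def lift0 : G → AdjZ G := Option.some

lemma lift0_add (x y : G) : lift0 (x + y) = lift0 x + lift0 y := rfl

lemma lift0_inj : Function.Injective (lift0 (G := G)) := fun _ _ h => Option.some.inj h

lemma lift0_tupSum : ∀ (m : ℕ) (g : Fin (m + 1) → G),
    lift0 (tupSum g) = ∑ i : Fin (m + 1), lift0 (g i) := by
  intro m
  induction m with
  | zero =>
    intro g
    simp [tupSum]
  | succ m ih =>
    intro g
    show lift0 (tupSum (fun i => g i.castSucc) + g (Fin.last _)) = _
    rw [lift0_add, ih]
    conv_rhs => rw [Fin.sum_univ_castSucc]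


def elim0 {β : Type v} (junk : β) (fc : G → β) : AdjZ G → β := fun z =>
  Option.elim z junk fc

lemma elim0_lift {β : Type v} (junk : β) (fc : G → β) (x : G) :
    elim0 junk fc (lift0 x) = fc x := rfl

/-- position (rank) of `x` within the finite set `s`. -/
noncomputable def posIn {W : Type u} [LinearOrder W] (s : Finset W) (x : W) : ℕ :=
  (s.filter (· < x)).card

theorem stmt2'' (l : Cardinal.{u}) (hl : ℵ₀ ≤ l) (c : ℕ) (hc : 0 < c) :
    ∃ κ : Cardinal.{u}, l < κ ∧
      ∀ (G : Type u) [AddCommSemigroup G], #G = κ →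
        ∀ f : G → Fin c, ∃ H : Set G, #H = l ∧
          ∃ a b : ℕ, 0 < a ∧ 0 < b ∧ ∃ i : Fin c,
            FSMono f {a, b, a + b} H i := by
  obtain ⟨nS, hS⟩ := schur c
  set N : ℕ := nS + 1 with hN
  refine ⟨Order.succ (bethA l nS), lt_of_le_of_lt (le_bethA l nS) (Order.lt_succ _), ?_⟩
  intro G _ hG f
  set W : Type u := (Order.succ (bethA l nS)).ord.ToType with hWdef
  have hW : #W = Order.succ (bethA l nS) := by rw [hWdef, mk_toType, card_ord]
  have hWG : Nonempty (W ≃ G) := by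
    rw [← Cardinal.eq, hW, hG]
  obtain ⟨e⟩ := hWG
  set junk : Fin c := ⟨0, hc⟩ with hjunk
  set fbar : AdjZ G → Fin c := elim0 junk f with hfbar
  set Ssum : Finset G → AdjZ G := fun t => ∑ x ∈ t, lift0 x with hSsum
  set F : Finset W → ULift.{u} (Fin (N + 1) → Fin c) := fun s => ULift.up (fun j =>
    fbar (Ssum ((s.filter (fun x => posIn s x < j.1)).image e))) with hF
  have hι : #(ULift.{u} (Fin (N + 1) → Fin c)) ≤ l := by
    refine le_trans ?_ hl
    exact le_of_lt (lt_aleph0_of_finite _)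
  have hα : bethA l nS < #W := by rw [hW]; exact Order.lt_succ _
  obtain ⟨H', v, hH', hhom⟩ :=
    erdosRado nS l hl W (ULift.{u} (Fin (N + 1) → Fin c)) hι hα F
  -- extract initial part of H' of size exactly l
  haveI hwo1 : IsWellOrder l.ord.ToType (· < ·) := isWellOrder_lt
  haveI hwo2 : IsWellOrder (↥H') (· < ·) := isWellOrder_lt
  have hord : (Ordinal.type ((· < ·) : l.ord.ToType → l.ord.ToType → Prop)) ≤
      Ordinal.type ((· < ·) : ↥H' → ↥H' → Prop) := by
    rw [Ordinal.type_toType, Cardinal.ord_le, Ordinal.card_type]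
    exact hH'.le
  obtain ⟨φ⟩ := Ordinal.type_le_iff.mp hord
  set Hfin : Set W := Subtype.val '' (Set.range φ) with hHfin
  have hHfinsub : Hfin ⊆ H' := by
    rintro x ⟨y, _, rfl⟩
    exact y.2
  have hHfl : #Hfin = l := by
    rw [hHfin, mk_image_eq Subtype.val_injective]
    have h9 := mk_range_eq _ φ.injective
    exact h9.trans (by rw [mk_toType, card_ord])
  set Hrest : Set W := H' \ Hfin with hHrest
  have hrest : Hrest.Infinite := by
    intro hfin
    haveI := hfin.to_subtype
    have h1 : #H' ≤ #Hfin + #Hrest := by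
      refine le_trans (mk_le_mk_of_subset ?_) (mk_union_le _ _)
      intro x hx
      by_cases h : x ∈ Hfin
      · exact Or.inl h
      · exact Or.inr ⟨hx, h⟩
    have h2 : #Hrest ≤ ℵ₀ := le_of_lt (lt_aleph0_of_finite _)
    rw [hHfl] at h1
    have h3 : #H' ≤ l := by
      refine h1.trans ?_
      calc l + #Hrest ≤ l + ℵ₀ := add_le_add_right h2 l
        _ = l := add_eq_left hl hl
    exact absurd hH' (not_lt.mpr h3)
  have habove : ∀ x ∈ Hfin, ∀ y ∈ Hrest, x < y := by
    rintro x ⟨x', hx', rfl⟩ y hy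
    set y' : ↥H' := ⟨y, hy.1⟩ with hy'
    have hy'nr : y' ∉ Set.range φ := by
      intro h
      exact hy.2 ⟨y', h, rfl⟩
    obtain ⟨z, rfl⟩ := hx'
    have h1 : ¬ (y' < φ z) := by
      intro h
      exact hy'nr (φ.mem_range_of_rel h)
    have h2 : y' ≠ φ z := by
      intro h
      exact hy'nr ⟨z, h.symm⟩
    have h3 : φ z < y' := by
      rcases lt_trichotomy y' (φ z) with h | h | h
      · exact absurd h h1
      · exact absurd h h2
      · exact h
    exact h3
  -- canonical colors
  set d : ℕ → Fin c := fun j => if h : j ≤ N then v.down ⟨j, by omega⟩ else v.down 0 with hd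
  have hcanon : ∀ t : Finset W, ↑t ⊆ Hfin → 1 ≤ t.card → t.card ≤ N →
      fbar (Ssum (t.image e)) = d t.card := by
    intro t ht h1 h2
    obtain ⟨u, hu, hucard⟩ := hrest.exists_subset_card_eq (N - t.card)
    set s : Finset W := t ∪ u with hs
    have hdisj : Disjoint t u := by
      rw [Finset.disjoint_left]
      intro x hxt hxu
      exact absurd (habove x (ht hxt) x (hu hxu)) (lt_irrefl x)
    have hscard : s.card = N := by
      rw [hs, Finset.card_union_of_disjoint hdisj]
      omega
    have hsH' : ↑s ⊆ H' := by
      intro x hx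
      rw [hs] at hx
      rcases Finset.mem_union.mp (by exact_mod_cast hx) with h | h
      · exact hHfinsub (ht h)
      · exact (hu h).1
    have hposx : ∀ x ∈ t, posIn s x < t.card := by
      intro x hx
      have hfeq : s.filter (· < x) = t.filter (· < x) := by
        ext y
        simp only [Finset.mem_filter, hs, Finset.mem_union]
        constructor
        · rintro ⟨h | h, hy⟩
          · exact ⟨h, hy⟩
          · exact absurd hy (not_lt.mpr (le_of_lt (habove x (ht hx) y (hu h))))
        · rintro ⟨h, hy⟩
          exact ⟨Or.inl h, hy⟩
      have hsubset : t.filter (· < x) ⊆ t.erase x := by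
        intro y hy
        rw [Finset.mem_erase]
        obtain ⟨hyt, hyx⟩ := Finset.mem_filter.mp hy
        exact ⟨ne_of_lt hyx, hyt⟩
      have := Finset.card_le_card hsubset
      rw [Finset.card_erase_of_mem hx] at this
      unfold posIn
      rw [hfeq]
      omega
    have hposu : ∀ x ∈ u, ¬ posIn s x < t.card := by
      intro x hx
      have hsubset : t ⊆ s.filter (· < x) := by
        intro y hy
        rw [Finset.mem_filter]
        exact ⟨Finset.mem_union_left _ hy, habove y (ht hy) x (hu hx)⟩
      have := Finset.card_le_card hsubset
      unfold posIn
      omega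
    have hfil : s.filter (fun x => posIn s x < t.card) = t := by
      ext x
      rw [Finset.mem_filter]
      constructor
      · rintro ⟨hxs, hpos⟩
        rcases Finset.mem_union.mp (hs ▸ hxs) with h | h
        · exact h
        · exact absurd hpos (hposu x h)
      · intro hx
        exact ⟨Finset.mem_union_left _ hx, hposx x hx⟩
    have hhs := hhom s hsH' (by omega)
    have hj : t.card < N + 1 := by omega
    have hval : fbar (Ssum ((s.filter (fun x => posIn s x < t.card)).image e))
        = v.down ⟨t.card, hj⟩ := by
      have h9 := congrFun (congrArg ULift.down hhs) ⟨t.card, hj⟩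
      rw [hF] at h9
      exact h9
    rw [hfil] at hval
    rw [hval, hd]
    beta_reduce
    rw [dif_pos h2]
  obtain ⟨a, b, ha, hb, hab, hd1, hd2⟩ := hS d
  refine ⟨e '' Hfin, ?_, a, b, ha, hb, d a, ?_⟩
  · rw [mk_image_eq e.injective, hHfl]
  · intro m hm g hg hgH
    set t : Finset W := Finset.univ.image (fun i => e.symm (g i)) with ht
    have htH : ↑t ⊆ Hfin := by
      intro x hx
      rw [ht] at hx
      simp only [Finset.coe_image, Set.mem_image] at hx
      obtain ⟨i, _, rfl⟩ := hx
      obtain ⟨y, hy, hyx⟩ := hgH i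
      rw [← hyx, Equiv.symm_apply_apply]
      exact hy
    have hinjc : Function.Injective (fun i : Fin (m + 1) => e.symm (g i)) :=
      fun x y hxy => hg (e.symm.injective hxy)
    have htcard : t.card = m + 1 := by
      rw [ht, Finset.card_image_of_injective _ hinjc, Finset.card_univ, Fintype.card_fin]
    have hmcase : m + 1 = a ∨ m + 1 = b ∨ m + 1 = a + b := by
      simpa using hm
    have ht2 : t.card ≤ N := by
      rw [htcard]
      rcases hmcase with h | h | h <;> omega
    have ht1 : 1 ≤ t.card := by rw [htcard]; omega
    have h5 : t.image e = Finset.univ.image g := by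
      rw [ht, Finset.image_image]
      congr 1
      ext i
      simp
    have h6 : f (tupSum g) = fbar (Ssum (Finset.univ.image g)) := by
      have h7 : Ssum (Finset.univ.image g) = lift0 (tupSum g) := by
        rw [hSsum]
        simp only
        rw [Finset.sum_image (fun x _ y _ h => hg h)]
        exact (lift0_tupSum m g).symm
      rw [h7, hfbar, elim0_lift]
    rw [h6, ← h5, hcanon t htH ht1 ht2, htcard]
    rcases hmcase with h | h | h
    · rw [h]
    · rw [h, ← hd1]
    · rw [h, hd2]


end HSAux

open HSAux in
/-- Uncountable Hindman–Schur theorem. -/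
theorem stmt2 (l : Cardinal.{u}) (hl : ℵ₀ ≤ l) (c : ℕ) (hc : 0 < c) :
    ∃ κ : Cardinal.{u}, l < κ ∧
      ∀ (G : Type u) [AddCommSemigroup G], #G = κ →
        ∀ f : G → Fin c, ∃ H : Set G, #H = l ∧
          ∃ a b : ℕ, 0 < a ∧ 0 < b ∧ ∃ i : Fin c,
            FSMono f {a, b, a + b} H i :=
  HSAux.stmt2'' l hl c hc
end

section
/- For every infinite cardinal λ and every positive integer c, there exists a cardinal κ > λ such that for every coloring f of the set [κ]^{<ω} of finite subsets of κ in c colors, there exist a λ-sized family H of finite nonempty subsets of κ which is pairwise unmeshed (a block sequence) and positive integers a, b such that all unions of a-many, of b-many, and of (a+b)-many pairwise distinct members of H receive the same color under f. -/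
open Cardinal

universe u

/-- Two finite sets are unmeshed if all elements of one are below all elements of the other. -/
def Unmeshed {α : Type u} [LinearOrder α] (x y : Finset α) : Prop :=
  (∀ a ∈ x, ∀ b ∈ y, a < b) ∨ (∀ a ∈ y, ∀ b ∈ x, a < b)

/-- `FUMono f A H i` : all unions of `j`-many pairwise distinct members of `H`,
for `j ∈ A`, have color `i` under `f` (i.e. `FU^A(H)` is monochromatic of color `i`). -/
def FUMono {α : Type u} [LinearOrder α] {c : ℕ} (f : Finset α → Fin c)
    (A : Set ℕ) (H : Set (Finset α)) (i : Fin c) : Prop :=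
  ∀ m ∈ A, ∀ g : Fin m → Finset α, Function.Injective g →
    (∀ j, g j ∈ H) → f (Finset.univ.sup g) = i

section ER
open scoped Classical

variable {I α γ : Type u}

/-- `f` is constant with value `i` on `n`-element subsets of `X`. -/
def HomogOn (f : Finset α → γ) (n : ℕ) (X : Set α) (i : γ) : Prop :=
  ∀ s : Finset α, ↑s ⊆ X → s.card = n → f s = i

/-- Ramsey property: every coloring of `n`-subsets of `α` by `γ` has a
homogeneous set of cardinality at least `l`. -/
def RamseyFor (α γ : Type u) (n : ℕ) (l : Cardinal.{u}) : Prop :=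
  ∀ f : Finset α → γ, ∃ X : Set α, l ≤ #X ∧ ∃ i, HomogOn f n X i

variable [LinearOrder I] [LinearOrder α] [WellFoundedLT I] [WellFoundedLT α]

/-- The end-homogeneous sequence attempt with anchor `b`. -/
noncomputable def ehSeq (f : Finset α → γ) (n : ℕ) (b : α) : I → α :=
  (wellFounded_lt (α := I)).fix fun ξ ih =>
    let S : Set α := {x | ∃ η, ∃ h : η < ξ, ih η h = x}
    let P : Set α := {x | x ∉ S ∧ ∀ t : Finset α, ↑t ⊆ S → t.card = n →
        f (insert x t) = f (insert b t)}
    if h : P.Nonempty then (wellFounded_lt (α := α)).min P h else b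

def ehSet (f : Finset α → γ) (n : ℕ) (b : α) (ξ : I) : Set α :=
  {x | ∃ η, ∃ _ : η < ξ, ehSeq f n b η = x}

def ehGood (f : Finset α → γ) (n : ℕ) (b : α) (ξ : I) : Set α :=
  {x | x ∉ ehSet f n b ξ ∧ ∀ t : Finset α, ↑t ⊆ ehSet f n b ξ → t.card = n →
    f (insert x t) = f (insert b t)}

theorem ehSeq_def (f : Finset α → γ) (n : ℕ) (b : α) (ξ : I) :
    ehSeq f n b ξ = if h : (ehGood f n b ξ).Nonempty
      then (wellFounded_lt (α := α)).min (ehGood f n b ξ) h else b := by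
  show (wellFounded_lt (α := I)).fix _ ξ = _
  rw [WellFounded.fix_eq]
  rfl


variable {f : Finset α → γ} {n : ℕ} {b : α}

theorem ehGood_nonempty (hb : ∀ ξ : I, ehSeq f n b ξ ≠ b) (ξ : I) :
    (ehGood f n b ξ).Nonempty := by
  refine ⟨b, ?_, fun t _ _ => rfl⟩
  rintro ⟨η, hη, he⟩
  exact hb η he

theorem ehSeq_eq_min {ξ : I} (h : (ehGood f n b ξ).Nonempty) :
    ehSeq f n b ξ = (wellFounded_lt (α := α)).min (ehGood f n b ξ) h := by
  rw [ehSeq_def, dif_pos h]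

theorem ehSeq_mem (hb : ∀ ξ : I, ehSeq f n b ξ ≠ b) (ξ : I) :
    ehSeq f n b ξ ∈ ehGood f n b ξ := by
  rw [ehSeq_eq_min (ehGood_nonempty hb ξ)]
  exact WellFounded.min_mem _ _ _

theorem ehSeq_inj (hb : ∀ ξ : I, ehSeq f n b ξ ≠ b) :
    Function.Injective (ehSeq f n b : I → α) := by
  intro η ξ he
  by_contra hne
  rcases Ne.lt_or_gt hne with h | h
  · exact (ehSeq_mem hb ξ).1 ⟨η, h, he⟩
  · exact (ehSeq_mem hb η).1 ⟨ξ, h, he.symm⟩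

omit [LinearOrder α] [WellFoundedLT α] in
theorem min_congr {r : α → α → Prop} (wf : WellFounded r) {S S' : Set α} (h : S = S')
    (hS : S.Nonempty) : wf.min S hS = wf.min S' (h ▸ hS) := by
  subst h; rfl


theorem ramsey_step [Fintype γ] [Nonempty γ] {σ l : Cardinal.{u}}
    (hσ : ℵ₀ ≤ σ) (hI : #I ≤ σ) (hα : 2 ^ σ < #α) (n : ℕ)
    (ih : RamseyFor I γ n l) : RamseyFor α γ (n + 1) l := by
  intro f
  have hcase : ∃ b : α, ∀ ξ : I, ehSeq f n b ξ ≠ b := by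
    by_contra hA
    push_neg at hA
    -- minimal hitting index
    have hne : ∀ b : α, {ξ : I | ehSeq f n b ξ = b}.Nonempty := hA
    set wfI := (wellFounded_lt (α := I)) with hwfI
    let ξm : α → I := fun b => wfI.min _ (hne b)
    have hξm : ∀ b, ehSeq f n b (ξm b) = b := fun b => wfI.min_mem _ (hne b)
    have hξmin : ∀ b, ∀ η < ξm b, ehSeq f n b η ≠ b := by
      intro b η hη hc
      exact wfI.not_lt_min _ hc hη
    -- b is in each Good set up to ξm b
    have hbmem : ∀ b, ∀ η ≤ ξm b, b ∈ ehGood f n b η := by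
      intro b η hη
      refine ⟨?_, fun t _ _ => rfl⟩
      rintro ⟨η', hη', he⟩
      exact hξmin b η' (lt_of_lt_of_le hη' hη) he
    -- the encoding map
    let Φ : α → I × (Finset I → γ) := fun b =>
      (ξm b, fun u => f (insert b (u.image (ehSeq f n b))))
    have hΦ : Function.Injective Φ := by
      intro b b' hbb
      have h1 : ξm b = ξm b' := congrArg Prod.fst hbb
      have h2 := congrArg Prod.snd hbb
      have claim : ∀ η : I, η ≤ ξm b → ehSeq f n b η = ehSeq f n b' η := by
        intro η
        induction η using WellFoundedLT.induction with
        | ind η IH =>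
          intro hηξ
          have hSeteq : ehSet f n b η = ehSet f n b' η := by
            ext x
            constructor
            · rintro ⟨η', hη', rfl⟩
              exact ⟨η', hη', (IH η' hη' ((hη'.trans_le hηξ).le)).symm⟩
            · rintro ⟨η', hη', rfl⟩
              exact ⟨η', hη', IH η' hη' ((hη'.trans_le hηξ).le)⟩
          have hfeq : ∀ t : Finset α, ↑t ⊆ ehSet f n b η →
              f (insert b t) = f (insert b' t) := by
            intro t ht
            have himg : ↑t ⊆ (ehSeq f n b : I → α) '' Set.Iio η := by
              intro x hx
              rcases ht hx with ⟨η', hη', he⟩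
              exact ⟨η', hη', he⟩
            obtain ⟨u, hu, hut⟩ := Finset.subset_set_image_iff.mp himg
            have e1 : f (insert b (u.image (ehSeq f n b))) =
                f (insert b' (u.image (ehSeq f n b'))) := congrFun h2 u
            have e2 : u.image (ehSeq f n b') = t := by
              rw [← hut]
              apply Finset.image_congr
              intro η' hη'
              exact (IH η' (hu hη') (((hu hη').trans_le hηξ).le)).symm
            rw [← hut, e1, e2, hut]
          have hGoodeq : ehGood f n b η = ehGood f n b' η := by
            ext x
            constructor
            · rintro ⟨hx, hc⟩
              rw [hSeteq] at hx
              refine ⟨hx, fun t ht hcard => ?_⟩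
              rw [← hSeteq] at ht
              exact (hc t ht hcard).trans (hfeq t ht)
            · rintro ⟨hx, hc⟩
              rw [← hSeteq] at hx
              refine ⟨hx, fun t ht hcard => ?_⟩
              have ht' : ↑t ⊆ ehSet f n b' η := by rw [← hSeteq]; exact ht
              exact (hc t ht' hcard).trans (hfeq t ht).symm
          have hne1 : (ehGood f n b η).Nonempty := ⟨b, hbmem b η hηξ⟩
          rw [ehSeq_eq_min hne1, ehSeq_eq_min (hGoodeq ▸ hne1),
            min_congr _ hGoodeq hne1]
      have hfin := claim (ξm b) le_rfl
      rw [hξm b, h1, hξm b'] at hfin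
      exact hfin
    -- cardinality contradiction
    have hcard : #α ≤ 2 ^ σ := by
      have h1 : #α ≤ #(I × (Finset I → γ)) := mk_le_of_injective hΦ
      have h2 : #(I × (Finset I → γ)) = #I * #(Finset I → γ) := by
        simp [mk_prod]
      have h3 : #(Finset I → γ) ≤ σ ^ σ := by
        rw [← power_def]
        have hFin : #(Finset I) ≤ σ := by
          rcases finite_or_infinite I with h | h
          · haveI := h
            haveI := Fintype.ofFinite I
            exact (lt_aleph0_of_finite (Finset I)).le.trans hσ
          · rw [mk_finset_of_infinite]; exact hI
        have hγ : #γ ≤ σ := (lt_aleph0_of_finite γ).le.trans hσ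
        calc #γ ^ #(Finset I) ≤ σ ^ #(Finset I) := power_le_power_right hγ
          _ ≤ σ ^ σ := power_le_power_left (aleph0_pos.trans_le hσ).ne' hFin
      have h4 : σ ^ σ = 2 ^ σ := power_self_eq hσ
      calc #α ≤ #I * #(Finset I → γ) := h2 ▸ h1
        _ ≤ σ * (2 ^ σ) := mul_le_mul' hI (h4 ▸ h3)
        _ = 2 ^ σ := by
            rw [mul_eq_max hσ (hσ.trans (cantor σ).le), max_eq_right (cantor σ).le]
    exact absurd hcard (not_le.mpr hα)
  obtain ⟨b, hb⟩ := hcase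
  -- end-homogeneous: apply the induction hypothesis
  obtain ⟨Y, hY, i, hhom⟩ := ih (fun u => f (insert b (u.image (ehSeq f n b))))
  refine ⟨(ehSeq f n b : I → α) '' Y, ?_, i, ?_⟩
  · rw [Cardinal.mk_image_eq (ehSeq_inj hb)]
    exact hY
  · intro s hs hcard
    obtain ⟨u, hu, hut⟩ := Finset.subset_set_image_iff.mp hs
    have hucard : u.card = n + 1 := by
      rw [← hcard, ← hut]
      exact (Finset.card_image_of_injective u (ehSeq_inj hb)).symm
    have hune : u.Nonempty := Finset.card_pos.mp (by omega)
    set ξ := u.max' hune with hξ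
    have hmax : ξ ∈ u := u.max'_mem hune
    have hsplit : s = insert (ehSeq f n b ξ) ((u.erase ξ).image (ehSeq f n b)) := by
      rw [← hut, ← Finset.image_insert, Finset.insert_erase hmax]
    have htsub : ↑((u.erase ξ).image (ehSeq f n b)) ⊆ ehSet f n b ξ := by
      intro x hx
      simp only [Finset.coe_image, Set.mem_image, Finset.mem_coe] at hx
      obtain ⟨η, hη, rfl⟩ := hx
      have hηu := Finset.mem_of_mem_erase hη
      have : η < ξ := lt_of_le_of_ne (u.le_max' η hηu) (Finset.ne_of_mem_erase hη)
      exact ⟨η, this, rfl⟩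
    have htcard : ((u.erase ξ).image (ehSeq f n b)).card = n := by
      rw [Finset.card_image_of_injective _ (ehSeq_inj hb), Finset.card_erase_of_mem hmax,
        hucard]
      omega
    have hend := (ehSeq_mem hb ξ).2 _ htsub htcard
    rw [hsplit, hend]
    refine hhom (u.erase ξ) ?_ ?_
    · exact fun η hη => hu (Finset.mem_of_mem_erase hη)
    · rw [Finset.card_erase_of_mem hmax, hucard]
      omega

end ER

noncomputable def erCard (l : Cardinal.{u}) : ℕ → Cardinal.{u}
  | 0 => l
  | n + 1 => Order.succ (2 ^ erCard l n)

theorem erCard_le (l : Cardinal.{u}) (hl : ℵ₀ ≤ l) : ∀ n, l ≤ erCard l n ∧ ℵ₀ ≤ erCard l n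
  | 0 => ⟨le_rfl, hl⟩
  | n + 1 => by
    obtain ⟨h1, h2⟩ := erCard_le l hl n
    have h3 : erCard l n ≤ erCard l (n + 1) := by
      show erCard l n ≤ Order.succ (2 ^ erCard l n)
      exact ((cantor _).le.trans (Order.le_succ _))
    exact ⟨h1.trans h3, h2.trans h3⟩

theorem erCard_lt (l : Cardinal.{u}) (hl : ℵ₀ ≤ l) (n : ℕ) : l < erCard l (n + 1) := by
  have h1 := (erCard_le l hl n).1
  calc l ≤ 2 ^ erCard l n := h1.trans (cantor _).le
    _ < Order.succ (2 ^ erCard l n) := Order.lt_succ _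

theorem ramsey_chain (l : Cardinal.{u}) (hl : ℵ₀ ≤ l) (γ : Type u) [Fintype γ] [Nonempty γ] :
    ∀ n, RamseyFor ((erCard l n).ord.ToType) γ n l
  | 0 => by
    intro f
    refine ⟨Set.univ, ?_, f ∅, ?_⟩
    · rw [Cardinal.mk_univ, mk_ord_toType]
      exact le_rfl
    · intro s _ hcard
      rw [Finset.card_eq_zero.mp hcard]
  | n + 1 => by
    have ih := ramsey_chain l hl γ n
    refine ramsey_step (I := (erCard l n).ord.ToType) (σ := erCard l n)
      (erCard_le l hl n).2 ?_ ?_ n ih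
    · rw [mk_ord_toType]
    · rw [mk_ord_toType]
      exact Order.lt_succ _

/-- Infinite Schur theorem, from Hindman's theorem. -/
theorem schur_inf (c : ℕ) (hc : 0 < c) (χ : ℕ → Fin c) :
    ∃ a b : ℕ, 0 < a ∧ 0 < b ∧ χ a = χ b ∧ χ b = χ (a + b) := by
  haveI : Nonempty (Fin c) := Fin.pos_iff_nonempty.mp hc
  have hcov : (⊤ : Set ℕ+) ⊆ ⋃₀ (Set.range fun i : Fin c => {m : ℕ+ | χ m.val = i}) := by
    intro m _
    exact ⟨{m' : ℕ+ | χ m'.val = χ m.val}, ⟨χ m.val, rfl⟩, rfl⟩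
  obtain ⟨s, ⟨i, rfl⟩, a, ha⟩ := Hindman.exists_FS_of_finite_cover
    (Set.range fun i : Fin c => {m : ℕ+ | χ m.val = i}) (Set.finite_range _) hcov
  refine ⟨(a.get 0 : ℕ+), (a.get 1 : ℕ+), (a.get 0).2, (a.get 1).2, ?_, ?_⟩
  · have h0 : χ (a.get 0 : ℕ+) = i := ha (Hindman.FS.singleton a 0)
    have h1 : χ (a.get 1 : ℕ+) = i := ha (Hindman.FS.singleton a 1)
    rw [h0, h1]
  · have h1 : χ (a.get 1 : ℕ+) = i := ha (Hindman.FS.singleton a 1)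
    have h2 : χ ((a.get 0 + a.get 1 : ℕ+) : ℕ) = i := ha (Hindman.FS.add_two a 0 1 one_pos)
    rw [h1, ← PNat.add_coe] at *
    rw [h2]

/-- Every function to a finite type is ultrafilter-a.e. constant. -/
theorem ultra_const {c : ℕ} (u : Ultrafilter ℕ) (g : ℕ → Fin c) :
    ∃ i : Fin c, {N : ℕ | g N = i} ∈ u := by
  by_contra h
  push_neg at h
  have h2 : ∀ i : Fin c, {N : ℕ | g N = i}ᶜ ∈ u := fun i =>
    (Ultrafilter.compl_mem_iff_notMem).mpr (h i)
  have h3 : (⋂ i : Fin c, {N : ℕ | g N = i}ᶜ) ∈ (u : Filter ℕ) :=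
    Filter.iInter_mem.mpr h2
  obtain ⟨N, hN⟩ := Ultrafilter.nonempty_of_mem h3
  exact (Set.mem_iInter.mp hN (g N)) rfl

/-- Finite Schur theorem with a uniform bound, by compactness. -/
theorem schur_bound (c : ℕ) (hc : 0 < c) :
    ∃ N : ℕ, ∀ χ : ℕ → Fin c, ∃ a b : ℕ, 0 < a ∧ 0 < b ∧ a + b ≤ N ∧
      χ a = χ b ∧ χ b = χ (a + b) := by
  by_contra h
  push_neg at h
  choose χf hχ using h
  set u : Ultrafilter ℕ := Filter.hyperfilter ℕ with hu
  have hconst : ∀ n : ℕ, ∃ i : Fin c, {N : ℕ | χf N n = i} ∈ u := fun n =>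
    ultra_const u (fun N => χf N n)
  choose χ hχmem using hconst
  obtain ⟨a, b, ha, hb, h1, h2⟩ := schur_inf c hc χ
  have hbig : {N : ℕ | a + b ≤ N} ∈ u := by
    have : {N : ℕ | a + b ≤ N} ∈ Filter.cofinite := by
      rw [Filter.mem_cofinite]
      apply Set.Finite.subset (Set.finite_Iio (a + b))
      intro x hx
      simpa using hx
    exact Filter.hyperfilter_le_cofinite this
  have hall : ({N : ℕ | χf N a = χ a} ∩ ({N : ℕ | χf N b = χ b} ∩
      ({N : ℕ | χf N (a + b) = χ (a + b)} ∩ {N : ℕ | a + b ≤ N}))) ∈ (u : Filter ℕ) := by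
    exact Filter.inter_mem (hχmem a) (Filter.inter_mem (hχmem b)
      (Filter.inter_mem (hχmem (a + b)) hbig))
  obtain ⟨N, hNa, hNb, hNab, hNle⟩ := Ultrafilter.nonempty_of_mem hall
  exact hχ N a b ha hb hNle (by rw [hNa, hNb, h1]) (by rw [hNb, hNab, h2])

theorem sort_union_take {α : Type*} [LinearOrder α] (t u : Finset α)
    (h : ∀ x ∈ t, ∀ y ∈ u, x < y) :
    (((t ∪ u).sort (· ≤ ·)).take t.card).toFinset = t := by
  classical
  have hdisj : Disjoint t u := by
    rw [Finset.disjoint_left]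
    intro x hxt hxu
    exact absurd (h x hxt x hxu) (lt_irrefl x)
  have hperm : ((t ∪ u).sort (· ≤ ·)) = t.sort (· ≤ ·) ++ u.sort (· ≤ ·) := by
    refine (fun hp h1 h2 => List.Perm.eq_of_pairwise' (r := (· ≤ ·)) h1 h2 hp) ?_ ?_ ?_
    · rw [← Multiset.coe_eq_coe]
      have hcoe : ((t.sort (· ≤ ·) ++ u.sort (· ≤ ·) : List α) : Multiset α)
          = (t.sort (· ≤ ·) : Multiset α) + (u.sort (· ≤ ·) : Multiset α) := rfl
      rw [hcoe, Finset.sort_eq, Finset.sort_eq, Finset.sort_eq,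
        ← Finset.disjUnion_eq_union t u hdisj]
      rfl
    · exact Finset.pairwise_sort _ _
    · show List.Pairwise _ _
      rw [List.pairwise_append]
      refine ⟨Finset.pairwise_sort _ _, Finset.pairwise_sort _ _, ?_⟩
      intro x hx y hy
      exact (h x ((Finset.mem_sort _).mp hx) y ((Finset.mem_sort _).mp hy)).le
  rw [hperm, ← Finset.length_sort (α := α) (· ≤ ·) (s := t), List.take_left,
    Finset.sort_toFinset]

theorem sup_singletons {α β : Type*} [DecidableEq β] (s : Finset α) (y : α → β) :
    s.sup (fun j => ({y j} : Finset β)) = s.image y := by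
  rw [Finset.sup_eq_biUnion, Finset.biUnion_singleton]

/-- Uncountable Hindman–Schur theorem with unmeshedness. -/
theorem stmt3 (l : Cardinal.{u}) (hl : ℵ₀ ≤ l) (c : ℕ) (hc : 0 < c) :
    ∃ κ : Cardinal.{u}, l < κ ∧
      ∀ f : Finset κ.ord.ToType → Fin c,
        ∃ H : Set (Finset κ.ord.ToType), #H = l ∧ (∀ x ∈ H, x.Nonempty) ∧
          H.Pairwise Unmeshed ∧
          ∃ a b : ℕ, 0 < a ∧ 0 < b ∧ ∃ i : Fin c, FUMono f {a, b, a + b} H i := by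
  classical
  obtain ⟨N, hN⟩ := schur_bound c hc
  have hN1 : 1 ≤ N := by
    obtain ⟨a, b, ha, hb, hab, -⟩ := hN (fun _ => ⟨0, hc⟩)
    omega
  refine ⟨erCard l N, ?_, ?_⟩
  · have h := erCard_lt l hl (N - 1)
    rwa [Nat.sub_add_cancel hN1] at h
  set A := (erCard l N).ord.ToType with hA
  intro f
  haveI : Nonempty (Fin c) := Fin.pos_iff_nonempty.mp hc
  set G : Finset A → ULift.{u} (Fin N → Fin c) :=
    fun s => ⟨fun k => f ((s.sort (· ≤ ·)).take (k.1 + 1)).toFinset⟩ with hG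
  obtain ⟨X, hX, iG, hom⟩ := ramsey_chain l hl (ULift.{u} (Fin N → Fin c)) N G
  set v : Fin N → Fin c := iG.down with hv
  set X' : Set A := {x | x ∈ X ∧ ∃ u : Finset A, ↑u ⊆ X ∧ u.card = N ∧ ∀ y ∈ u, x < y}
    with hX'
  -- key monochromatic property on small subsets of X'
  have hmono : ∀ m : ℕ, ∀ _ : 1 ≤ m, ∀ _ : m ≤ N, ∀ t : Finset A, ↑t ⊆ X' → t.card = m →
      f t = v ⟨m - 1, by omega⟩ := by
    intro m hm1 hmN t ht hcard
    have htne : t.Nonempty := Finset.card_pos.mp (by omega)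
    obtain ⟨-, u, huX, hucard, hugt⟩ := ht (t.max'_mem htne)
    obtain ⟨u', hu'sub, hu'card⟩ := Finset.exists_subset_card_eq
      (show N - m ≤ u.card by omega)
    have hlt : ∀ p ∈ t, ∀ q ∈ u', p < q := fun p hp q hq =>
      lt_of_le_of_lt (t.le_max' p hp) (hugt q (hu'sub hq))
    have hdisj : Disjoint t u' := by
      rw [Finset.disjoint_left]
      intro p hp hp'
      exact absurd (hlt p hp p hp') (lt_irrefl _)
    have hscard : (t ∪ u').card = N := by
      rw [Finset.card_union_of_disjoint hdisj, hcard, hu'card]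
      omega
    have hssub : ↑(t ∪ u') ⊆ X := by
      rw [Finset.coe_union]
      exact Set.union_subset (fun p hp => (ht hp).1) (fun q hq => huX (hu'sub hq))
    have hGs := hom _ hssub hscard
    have hfun := congrFun (congrArg ULift.down hGs) ⟨m - 1, by omega⟩
    have hkey : (((t ∪ u').sort (· ≤ ·)).take (m - 1 + 1)).toFinset = t := by
      rw [show m - 1 + 1 = m by omega, ← hcard]
      exact sort_union_take t u' hlt
    rw [hG] at hfun
    simp only at hfun
    rw [hkey] at hfun
    exact hfun
  -- X minus X' is finite
  have habove : ∀ x, x ∈ X \ X' → {y | y ∈ X ∧ x < y}.Finite := by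
    intro x hx
    by_contra hinf
    obtain ⟨u, husub, hucard⟩ :=
      (show Set.Infinite {y | y ∈ X ∧ x < y} from hinf).exists_subset_card_eq N
    exact hx.2 ⟨hx.1, u, fun y hy => (husub hy).1, hucard, fun y hy => (husub hy).2⟩
  have hcardA : ∀ x, ∀ hx : x ∈ X \ X', (habove x hx).toFinset.card < N := by
    intro x hx
    by_contra hge
    push_neg at hge
    obtain ⟨u, husub, hucard⟩ := Finset.exists_subset_card_eq hge
    refine hx.2 ⟨hx.1, u, ?_, hucard, ?_⟩
    · exact fun y hy => ((habove x hx).mem_toFinset.mp (husub hy)).1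
    · exact fun y hy => ((habove x hx).mem_toFinset.mp (husub hy)).2
  have hstep : ∀ x ∈ X \ X', ∀ x' ∈ X \ X', x < x' →
      {y | y ∈ X ∧ x' < y}.ncard < {y | y ∈ X ∧ x < y}.ncard := by
    intro x hx x' hx' hlt
    refine Set.ncard_lt_ncard ?_ (habove x hx)
    constructor
    · exact fun y hy => ⟨hy.1, hlt.trans hy.2⟩
    · intro hcon
      exact absurd (hcon ⟨hx'.1, hlt⟩).2 (lt_irrefl x')
  have hinj : Set.InjOn (fun x => {y | y ∈ X ∧ x < y}.ncard) (X \ X') := by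
    intro x hx x' hx' he
    dsimp only at he
    by_contra hne
    rcases Ne.lt_or_gt hne with h | h
    · have := hstep x hx x' hx' h; omega
    · have := hstep x' hx' x hx h; omega
  have hdiff_fin : (X \ X').Finite := by
    refine Set.Finite.of_finite_image (Set.Finite.subset (Set.finite_Iio N) ?_) hinj
    rintro k ⟨x, hx, rfl⟩
    have h5 := hcardA x hx
    dsimp only
    rw [Set.mem_Iio, Set.ncard_eq_toFinset_card _ (habove x hx)]
    exact h5
  -- X' has cardinality at least l
  have hXl : l ≤ #↑X' := by
    by_contra hltl
    push_neg at hltl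
    have hsub2 : X ⊆ X' ∪ (X \ X') := fun x hx =>
      (em (x ∈ X')).elim Or.inl (fun h => Or.inr ⟨hx, h⟩)
    have h1 : l ≤ #↑(X' ∪ (X \ X')) := hX.trans (mk_le_mk_of_subset hsub2)
    have h2 : #↑(X' ∪ (X \ X')) ≤ #↑X' + #↑(X \ X') := mk_union_le _ _
    have h3 : #↑(X \ X') < ℵ₀ := by
      rw [mk_lt_aleph0_iff]
      exact hdiff_fin
    exact absurd (h1.trans h2) (not_le.mpr (add_lt_of_lt hl hltl (h3.trans_le hl)))
  obtain ⟨X'', hX''sub, hX''card⟩ := le_mk_iff_exists_subset.mp hXl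
  -- Schur
  set χ : ℕ → Fin c := fun m => if h : m - 1 < N then v ⟨m - 1, h⟩ else ⟨0, hc⟩ with hχ
  obtain ⟨a, b, ha, hb, habN, hab1, hab2⟩ := hN χ
  have hχval : ∀ m : ℕ, ∀ _ : 1 ≤ m, ∀ _ : m ≤ N, χ m = v ⟨m - 1, by omega⟩ := by
    intro m h1 h2
    rw [hχ]
    simp only
    rw [dif_pos (show m - 1 < N by omega)]
  -- the family of singletons
  refine ⟨(fun y : A => ({y} : Finset A)) '' X'', ?_, ?_, ?_, a, b, ha, hb, χ a, ?_⟩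
  · rw [mk_image_eq Finset.singleton_injective]
    exact hX''card
  · rintro x ⟨y, -, rfl⟩
    exact ⟨y, Finset.mem_singleton_self y⟩
  · rintro x ⟨y1, -, rfl⟩ z ⟨y2, -, rfl⟩ hne
    have hy12 : y1 ≠ y2 := fun h => hne (by rw [h])
    rcases Ne.lt_or_gt hy12 with h | h
    · left
      intro p hp q hq
      rw [Finset.mem_singleton.mp hp, Finset.mem_singleton.mp hq]
      exact h
    · right
      intro p hp q hq
      rw [Finset.mem_singleton.mp hp, Finset.mem_singleton.mp hq]
      exact h
  · intro m hm g hginj hgH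
    have hex : ∀ j, ∃ y, y ∈ X'' ∧ g j = {y} := by
      intro j
      rcases hgH j with ⟨y, hy, he⟩
      exact ⟨y, hy, he.symm⟩
    choose y hyX hgy using hex
    have hyinj : Function.Injective y := fun j k h =>
      hginj (by rw [hgy j, hgy k, h])
    have hsup : Finset.univ.sup g = Finset.univ.image y := by
      have hge : g = fun j => ({y j} : Finset A) := funext hgy
      rw [hge, sup_singletons]
    have hsubX' : ↑(Finset.univ.image y) ⊆ X' := by
      intro p hp
      rw [Finset.coe_image] at hp
      obtain ⟨j, -, rfl⟩ := hp
      exact hX''sub (hyX j)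
    have hcardm : (Finset.univ.image y).card = m := by
      rw [Finset.card_image_of_injective _ hyinj, Finset.card_univ, Fintype.card_fin]
    have hgoal : ∀ hm1 : 1 ≤ m, ∀ hmN : m ≤ N, f (Finset.univ.sup g) = χ m := by
      intro hm1 hmN
      rw [hsup, hmono m hm1 hmN _ hsubX' hcardm, hχval m hm1 hmN]
    have hm' : m = a ∨ m = b ∨ m = a + b := by simpa using hm
    rcases hm' with rfl | rfl | rfl
    · exact hgoal (by omega) (by omega)
    · rw [hgoal (by omega) (by omega)]
      exact hab1.symm
    · rw [hgoal (by omega) (by omega)]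
      rw [← hab2, ← hab1]
end

section
/- Let λ be an infinite cardinal and let d : [κ]² → 2 be a 2-coloring of pairs from κ. Define c : [κ]^{<ω} → 3 by: c(x) = 2 if |x| is odd; otherwise, writing x = y ∪ z with |y| = |z| and max(y) < min(z), set c(x) = d(max(y), max(z)). Suppose H is a λ-sized pairwise unmeshed family of finite nonempty subsets of κ, all of the same cardinality, and b is an even positive integer such that all unions of b-many distinct members of H get the same c-color i. Then i ∈ {0,1} and there exists X ⊆ κ with |X| = λ such that d is constant of value i on [X]². -/
open Cardinal

universe u

section Aux

open Ordinal

variable {α : Type u} [LinearOrder α]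

/-- Enumeration of a subset of a well-ordered type by ordinals, totalized. -/
noncomputable def stmt10Enum [WellFoundedLT α] (T : Set α) (h0 : Nonempty α)
    (o' : Ordinal.{u}) : α :=
  if h : o' < Ordinal.type ((· < ·) : ↥T → ↥T → Prop) then
    ((Ordinal.enum ((· < ·) : ↥T → ↥T → Prop) ⟨o', h⟩ : ↥T) : α)
  else h0.some

lemma stmt10Enum_mem [WellFoundedLT α] (T : Set α) (h0 : Nonempty α) {o' : Ordinal.{u}}
    (h : o' < Ordinal.type ((· < ·) : ↥T → ↥T → Prop)) : stmt10Enum T h0 o' ∈ T := by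
  rw [stmt10Enum, dif_pos h]
  exact (Ordinal.enum ((· < ·) : ↥T → ↥T → Prop) ⟨o', h⟩).2

lemma stmt10Enum_lt [WellFoundedLT α] (T : Set α) (h0 : Nonempty α) {o1 o2 : Ordinal.{u}}
    (h1 : o1 < Ordinal.type ((· < ·) : ↥T → ↥T → Prop))
    (h2 : o2 < Ordinal.type ((· < ·) : ↥T → ↥T → Prop)) (h : o1 < o2) :
    stmt10Enum T h0 o1 < stmt10Enum T h0 o2 := by
  rw [stmt10Enum, stmt10Enum, dif_pos h1, dif_pos h2]
  exact Subtype.coe_lt_coe.mpr (Ordinal.enum_lt_enum.mpr (Subtype.mk_lt_mk.mpr h))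

lemma stmt10_step {m : ℕ} (hm : 0 < m) {a b : Ordinal.{u}} (hab : a < b) {j : ℕ} (k : ℕ)
    (hj : j < m) :
    (m : Ordinal.{u}) * a + (j : ℕ) < (m : Ordinal.{u}) * b + (k : ℕ) := by
  calc (m : Ordinal.{u}) * a + (j : ℕ)
      < (m : Ordinal.{u}) * a + (m : ℕ) := by
        exact add_lt_add_right (by exact_mod_cast hj) _
    _ = (m : Ordinal.{u}) * Order.succ a := by rw [Ordinal.mul_succ]
    _ ≤ (m : Ordinal.{u}) * b := mul_le_mul_right (Order.succ_le_of_lt hab) _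
    _ ≤ _ := le_self_add

/-- Key extraction lemma: from a set `T` of size `l` in a well-order, extract `X ⊆ T` of size `l`
such that any `p < q` in `X` extend to a strictly increasing `(m+m)`-sequence in `T` with `p` at
position `m-1` and `q` at position `m+m-1`. -/
lemma stmt10_key [WellFoundedLT α] {l : Cardinal.{u}} (hl : ℵ₀ ≤ l)
    {T : Set α} (hT : #T = l) (m : ℕ) (hm : 0 < m) :
    ∃ X : Set α, X ⊆ T ∧ #X = l ∧ ∀ p ∈ X, ∀ q ∈ X, p < q →
      ∃ w : Fin (m + m) → α, StrictMono w ∧ (∀ j, w j ∈ T) ∧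
        w ⟨m - 1, by omega⟩ = p ∧ w ⟨m + m - 1, by omega⟩ = q := by
  have h0 : Nonempty α := by
    have hT0 : #T ≠ 0 := by rw [hT]; exact (aleph0_pos.trans_le hl).ne'
    obtain ⟨x⟩ := Cardinal.mk_ne_zero_iff.mp hT0
    exact ⟨x.1⟩
  have ho : l.ord ≤ Ordinal.type ((· < ·) : ↥T → ↥T → Prop) := by
    rw [Cardinal.ord_le, Ordinal.card_type, hT]
  have hpos : ∀ β : Ordinal.{u}, β < l.ord → ∀ j : ℕ,
      (m : Ordinal.{u}) * β + (j : ℕ) < Ordinal.type ((· < ·) : ↥T → ↥T → Prop) := by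
    intro β hβ j
    refine lt_of_lt_of_le ?_ ho
    rw [Cardinal.lt_ord, Ordinal.card_add, Ordinal.card_mul, Ordinal.card_nat, Ordinal.card_nat]
    exact Cardinal.add_lt_of_lt hl
      (Cardinal.mul_lt_of_lt hl ((Cardinal.nat_lt_aleph0 m).trans_le hl) (Cardinal.lt_ord.mp hβ))
      ((Cardinal.nat_lt_aleph0 j).trans_le hl)
  haveI : IsWellOrder l.ord.ToType (· < ·) := isWellOrder_lt
  let E : Ordinal.{u} → α := stmt10Enum T h0
  let ti : l.ord.ToType → Ordinal.{u} :=
    fun x => Ordinal.typein (α := l.ord.ToType) (· < ·) x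
  have hti : ∀ x, ti x < l.ord := fun x => Ordinal.typein_lt_self x
  have htimono : ∀ x y : l.ord.ToType, x < y → ti x < ti y := fun x y h =>
    (Ordinal.typein_lt_typein _).mpr h
  let f : l.ord.ToType → α := fun x => E ((m : Ordinal.{u}) * ti x + ((m - 1 : ℕ) : ℕ))
  have hfmono : StrictMono f := fun x y h =>
    stmt10Enum_lt T h0 (hpos _ (hti x) _) (hpos _ (hti y) _)
      (stmt10_step hm (htimono x y h) _ (by omega))
  refine ⟨Set.range f, ?_, ?_, ?_⟩
  · rintro p ⟨x, rfl⟩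
    exact stmt10Enum_mem T h0 (hpos _ (hti x) _)
  · rw [Cardinal.mk_range_eq f hfmono.injective, Cardinal.mk_ord_toType]
  · rintro p ⟨x, rfl⟩ q ⟨y, rfl⟩ hpq
    have hxy : ti x < ti y := by
      refine htimono _ _ ?_
      rcases lt_trichotomy x y with h | h | h
      · exact h
      · exact absurd hpq (by rw [h]; exact lt_irrefl _)
      · exact absurd hpq (not_lt.mpr (hfmono h).le)
    refine ⟨fun j => if hj : j.1 < m then E ((m : Ordinal.{u}) * ti x + (j.1 : ℕ))
        else E ((m : Ordinal.{u}) * ti y + ((j.1 - m : ℕ))), ?_, ?_, ?_, ?_⟩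
    · intro j1 j2 hj
      have hjj : j1.1 < j2.1 := hj
      dsimp only
      by_cases h1 : j1.1 < m <;> by_cases h2 : j2.1 < m
      · rw [dif_pos h1, dif_pos h2]
        exact stmt10Enum_lt T h0 (hpos _ (hti x) _) (hpos _ (hti x) _)
          (add_lt_add_right (by exact_mod_cast hjj) _)
      · rw [dif_pos h1, dif_neg h2]
        exact stmt10Enum_lt T h0 (hpos _ (hti x) _) (hpos _ (hti y) _)
          (stmt10_step hm hxy _ h1)
      · omega
      · rw [dif_neg h1, dif_neg h2]
        exact stmt10Enum_lt T h0 (hpos _ (hti y) _) (hpos _ (hti y) _)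
          (add_lt_add_right (by exact_mod_cast (show j1.1 - m < j2.1 - m by omega)) _)
    · intro j
      dsimp only
      split
      · exact stmt10Enum_mem T h0 (hpos _ (hti x) _)
      · exact stmt10Enum_mem T h0 (hpos _ (hti y) _)
    · have hlt' : ((⟨m - 1, by omega⟩ : Fin (m + m)) : ℕ) < m := by
        simp only [Fin.val_mk]; omega
      simp only [dif_pos hlt']
      rfl
    · have hge : ¬ (((⟨m + m - 1, by omega⟩ : Fin (m + m)) : ℕ) < m) := by
        simp only [Fin.val_mk]; omega
      simp only [dif_neg hge]
      have hval : ((⟨m + m - 1, by omega⟩ : Fin (m + m)) : ℕ) - m = m - 1 := by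
        simp only [Fin.val_mk]; omega
      rw [hval]

lemma stmt10_max_sup {t : ℕ} (ht : 0 < t) (v : Fin t → Finset α)
    (hnev : ∀ j, (v j).Nonempty)
    (hord : ∀ j1 j2 : Fin t, j1 < j2 → ∀ a ∈ v j1, ∀ b ∈ v j2, a < b)
    (hs : (Finset.univ.sup v).Nonempty) :
    (Finset.univ.sup v).max' hs = (v ⟨t - 1, by omega⟩).max' (hnev _) := by
  apply le_antisymm
  · apply Finset.max'_le
    intro a ha
    obtain ⟨j, -, hj⟩ := Finset.mem_sup.mp ha
    have hle : j ≤ (⟨t - 1, by omega⟩ : Fin t) :=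
      Fin.le_def.mpr (show j.1 ≤ t - 1 by have := j.isLt; omega)
    rcases eq_or_lt_of_le hle with h | h
    · rw [← h]
      exact Finset.le_max' _ a hj
    · exact le_of_lt (hord j _ h a hj _ (Finset.max'_mem _ _))
  · exact Finset.le_max' _ _ (Finset.mem_sup.mpr ⟨_, Finset.mem_univ _, Finset.max'_mem _ _⟩)

lemma stmt10_card_sup {t n : ℕ} (v : Fin t → Finset α)
    (hcard : ∀ j, (v j).card = n)
    (hord : ∀ j1 j2 : Fin t, j1 < j2 → ∀ a ∈ v j1, ∀ b ∈ v j2, a < b) :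
    (Finset.univ.sup v).card = t * n := by
  rw [Finset.sup_eq_biUnion, Finset.card_biUnion]
  · simp [hcard, Finset.sum_const, Finset.card_univ]
  · intro j1 _ j2 _ hne
    rcases hne.lt_or_gt with h | h
    · exact Finset.disjoint_left.mpr fun a ha hb => lt_irrefl a (hord _ _ h a ha a hb)
    · exact Finset.disjoint_right.mpr fun a ha hb => lt_irrefl a (hord _ _ h a ha a hb)

lemma stmt10_union_sup {m : ℕ} (u : Fin (m + m) → Finset α) :
    (Finset.univ.sup fun j : Fin m => u (Fin.castAdd m j)) ∪
      (Finset.univ.sup fun j : Fin m => u (Fin.natAdd m j)) = Finset.univ.sup u := by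
  ext a
  simp only [Finset.mem_union, Finset.mem_sup, Finset.mem_univ, true_and]
  constructor
  · rintro (⟨j, hj⟩ | ⟨j, hj⟩) <;> exact ⟨_, hj⟩
  · rintro ⟨j, hj⟩
    by_cases h : j.1 < m
    · left
      exact ⟨⟨j.1, h⟩, by rwa [show Fin.castAdd m ⟨j.1, h⟩ = j from Fin.ext rfl]⟩
    · right
      refine ⟨⟨j.1 - m, by have := j.isLt; omega⟩, ?_⟩
      rwa [show Fin.natAdd m ⟨j.1 - m, by have := j.isLt; omega⟩ = j from
        Fin.ext (by simp only [Fin.coe_natAdd]; omega)]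

end Aux

/-- Core of the lower-bound argument: from a monochromatic set of b-fold unions of an
unmeshed same-cardinality family, extract a monochromatic set for the pair coloring d. -/
theorem stmt10 (l κ : Cardinal.{u}) (hl : ℵ₀ ≤ l)
    (d : κ.ord.ToType → κ.ord.ToType → Fin 2)
    (c : Finset κ.ord.ToType → Fin 3)
    (hodd : ∀ x : Finset κ.ord.ToType, Odd x.card → c x = 2)
    (heven : ∀ (y z : Finset κ.ord.ToType) (hy : y.Nonempty) (hz : z.Nonempty),
      y.card = z.card → (∀ p ∈ y, ∀ q ∈ z, p < q) →
        c (y ∪ z) = Fin.castLE (by omega) (d (y.max' hy) (z.max' hz)))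
    (H : Set (Finset κ.ord.ToType)) (hHcard : #H = l)
    (hne : ∀ x ∈ H, x.Nonempty) (hum : H.Pairwise Unmeshed)
    (n : ℕ) (hn : ∀ x ∈ H, x.card = n)
    (b : ℕ) (hb : 0 < b) (hbe : Even b) (i : Fin 3)
    (hmono : FUMono c {b} H i) :
    i ≠ 2 ∧ ∃ X : Set κ.ord.ToType, #X = l ∧
      ∀ x ∈ X, ∀ y ∈ X, x < y → (d x y).val = i.val := by
  obtain ⟨m, rfl⟩ := hbe
  have hm : 0 < m := by omega
  -- the map sending a member of H to its maximum
  let μ : ↥H → κ.ord.ToType := fun s => (s : Finset κ.ord.ToType).max' (hne s s.2)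
  -- if maxima are ordered, the sets are fully ordered
  have hbelow : ∀ (s : Finset κ.ord.ToType) (hs : s ∈ H) (t : Finset κ.ord.ToType) (ht : t ∈ H),
      s.max' (hne s hs) < t.max' (hne t ht) → ∀ a ∈ s, ∀ b ∈ t, a < b := by
    intro s hs t ht hlt
    have hst : s ≠ t := by
      rintro rfl
      exact lt_irrefl _ hlt
    rcases hum hs ht hst with h | h
    · exact h
    · exact absurd (h _ (Finset.max'_mem _ (hne t ht)) _ (Finset.max'_mem _ (hne s hs)))
        (not_lt.mpr hlt.le)
  have hμinj : Function.Injective μ := by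
    intro s t hst
    by_contra hne'
    have hst' : (s : Finset κ.ord.ToType) ≠ (t : Finset κ.ord.ToType) :=
      fun h => hne' (Subtype.ext h)
    rcases hum s.2 t.2 hst' with h | h
    · exact ne_of_lt (h _ (Finset.max'_mem _ (hne s s.2)) _ (Finset.max'_mem _ (hne t t.2))) hst
    · exact ne_of_lt (h _ (Finset.max'_mem _ (hne t t.2)) _ (Finset.max'_mem _ (hne s s.2)))
        hst.symm
  have hTcard : #(Set.range μ) = l := by
    rw [Cardinal.mk_range_eq μ hμinj, hHcard]
  obtain ⟨X, hXT, hXcard, hXw⟩ := stmt10_key hl hTcard m hm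
  -- the core computation
  have hC : ∀ w : Fin (m + m) → κ.ord.ToType, StrictMono w → (∀ j, w j ∈ Set.range μ) →
      i.val = (d (w ⟨m - 1, by omega⟩) (w ⟨m + m - 1, by omega⟩)).val := by
    intro w hw hwT
    choose u hu using fun j => (hwT j)
    set v : Fin (m + m) → Finset κ.ord.ToType := fun j => (u j : Finset κ.ord.ToType) with hv
    have hvH : ∀ j, v j ∈ H := fun j => (u j).2
    have hvne : ∀ j, (v j).Nonempty := fun j => hne _ (hvH j)
    have hvmax : ∀ j, (v j).max' (hvne j) = w j := fun j => hu j
    have hvord : ∀ j1 j2 : Fin (m + m), j1 < j2 → ∀ a ∈ v j1, ∀ b ∈ v j2, a < b := by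
      intro j1 j2 h
      apply hbelow _ (hvH j1) _ (hvH j2)
      have hmm : μ (u j1) < μ (u j2) := by rw [hu j1, hu j2]; exact hw h
      exact hmm
    have hvinj : Function.Injective v := fun j1 j2 h =>
      hw.injective (by rw [← hu j1, ← hu j2]; exact congrArg μ (Subtype.ext h))
    have hcsup : c (Finset.univ.sup v) = i := hmono (m + m) rfl v hvinj hvH
    set y : Finset κ.ord.ToType := Finset.univ.sup fun j : Fin m => v (Fin.castAdd m j) with hy
    set z : Finset κ.ord.ToType := Finset.univ.sup fun j : Fin m => v (Fin.natAdd m j) with hz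
    have hordy : ∀ j1 j2 : Fin m, j1 < j2 →
        ∀ a ∈ v (Fin.castAdd m j1), ∀ b ∈ v (Fin.castAdd m j2), a < b := by
      intro j1 j2 h
      exact hvord _ _ (show Fin.castAdd m j1 < Fin.castAdd m j2 from h)
    have hordz : ∀ j1 j2 : Fin m, j1 < j2 →
        ∀ a ∈ v (Fin.natAdd m j1), ∀ b ∈ v (Fin.natAdd m j2), a < b := by
      intro j1 j2 h
      refine hvord _ _ ?_
      rw [Fin.lt_def]
      simp only [Fin.coe_natAdd]
      exact Nat.add_lt_add_left h _
    have hyne : y.Nonempty := by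
      obtain ⟨a, ha⟩ := hvne (Fin.castAdd m ⟨0, hm⟩)
      exact ⟨a, Finset.mem_sup.mpr ⟨⟨0, hm⟩, Finset.mem_univ _, ha⟩⟩
    have hzne : z.Nonempty := by
      obtain ⟨a, ha⟩ := hvne (Fin.natAdd m ⟨0, hm⟩)
      exact ⟨a, Finset.mem_sup.mpr ⟨⟨0, hm⟩, Finset.mem_univ _, ha⟩⟩
    have hycard : y.card = m * n :=
      stmt10_card_sup _ (fun j => hn _ (hvH _)) hordy
    have hzcard : z.card = m * n :=
      stmt10_card_sup _ (fun j => hn _ (hvH _)) hordz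
    have h4 : ∀ p ∈ y, ∀ q ∈ z, p < q := by
      intro p hp q hq
      obtain ⟨j1, -, h1⟩ := Finset.mem_sup.mp hp
      obtain ⟨j2, -, h2⟩ := Finset.mem_sup.mp hq
      refine hvord _ _ ?_ p h1 q h2
      rw [Fin.lt_def]
      simp only [Fin.coe_castAdd, Fin.coe_natAdd]
      have := j1.isLt
      omega
    have h5 := heven y z hyne hzne (hycard.trans hzcard.symm) h4
    have h6 : y ∪ z = Finset.univ.sup v := stmt10_union_sup v
    rw [h6, hcsup] at h5
    have hym : y.max' hyne = w ⟨m - 1, by omega⟩ := by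
      rw [stmt10_max_sup hm (fun j : Fin m => v (Fin.castAdd m j)) (fun j => hvne _) hordy hyne]
      have hc1 : Fin.castAdd m (⟨m - 1, by omega⟩ : Fin m) = (⟨m - 1, by omega⟩ : Fin (m + m)) :=
        Fin.ext rfl
      calc (v (Fin.castAdd m (⟨m - 1, by omega⟩ : Fin m))).max' _
          = w (Fin.castAdd m (⟨m - 1, by omega⟩ : Fin m)) := hu _
        _ = w ⟨m - 1, by omega⟩ := congrArg w hc1
    have hzm : z.max' hzne = w ⟨m + m - 1, by omega⟩ := by
      rw [stmt10_max_sup hm (fun j : Fin m => v (Fin.natAdd m j)) (fun j => hvne _) hordz hzne]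
      have hc2 : Fin.natAdd m (⟨m - 1, by omega⟩ : Fin m) = (⟨m + m - 1, by omega⟩ : Fin (m + m)) :=
        Fin.ext (by simp only [Fin.coe_natAdd, Fin.val_mk]; omega)
      calc (v (Fin.natAdd m (⟨m - 1, by omega⟩ : Fin m))).max' _
          = w (Fin.natAdd m (⟨m - 1, by omega⟩ : Fin m)) := hu _
        _ = w ⟨m + m - 1, by omega⟩ := congrArg w hc2
    rw [hym, hzm] at h5
    rw [h5]
    rfl
  have main : ∀ p ∈ X, ∀ q ∈ X, p < q → (d p q).val = i.val := by
    intro p hp q hq hlt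
    obtain ⟨w, hw, hwT, hwp, hwq⟩ := hXw p hp q hq hlt
    rw [← hwp, ← hwq]
    exact (hC w hw hwT).symm
  have hXinf : X.Infinite := by
    rw [← Set.infinite_coe_iff]
    exact Cardinal.infinite_iff.mpr (hXcard ▸ hl)
  obtain ⟨p, hp, q, hq, hpq⟩ := hXinf.nontrivial
  have hine2 : i ≠ 2 := by
    intro hi
    have hval : ∀ p' ∈ X, ∀ q' ∈ X, p' < q' → False := by
      intro p' hp' q' hq' h
      have h1 := main p' hp' q' hq' h
      rw [hi] at h1
      have h2 := (d p' q').isLt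
      simp at h1
      omega
    rcases hpq.lt_or_gt with h | h
    · exact hval p hp q hq h
    · exact hval q hq p hp h
  exact ⟨hine2, X, hXcard, main⟩
end

section
/- Let λ be an infinite cardinal, c a positive integer, and n a positive integer such that, by Schur's theorem, every c-coloring of {1,…,n} admits a, b with a, b, a+b ≤ n monochromatic. If κ satisfies κ → (λ)ⁿ_{cⁿ}, then for every commutative semigroup (G,+) of cardinality κ and every f : G → c there exist H ⊆ G with |H| = λ and positive integers a, b with a+b ≤ n such that FS^{{a,b,a+b}}(H) is f-monochromatic. -/
open Cardinal

universe u

/-- Embedding of a commutative semigroup into the monoid obtained by adjoining a unit. -/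
def toM {G : Type u} [AddCommSemigroup G] (x : G) :
    Additive (WithOne (Multiplicative G)) :=
  Additive.ofMul (↑(Multiplicative.ofAdd x) : WithOne (Multiplicative G))

lemma toM_add {G : Type u} [AddCommSemigroup G] (x y : G) :
    toM (x + y) = toM x + toM y := by
  show Additive.ofMul (↑(Multiplicative.ofAdd x * Multiplicative.ofAdd y) :
    WithOne (Multiplicative G)) = _
  rw [WithOne.coe_mul]
  rfl

lemma toM_injective {G : Type u} [AddCommSemigroup G] :
    Function.Injective (toM (G := G)) := by
  intro x y h
  have := WithOne.coe_inj.mp (Additive.ofMul.injective h)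
  exact Multiplicative.ofAdd.injective this

lemma toM_tupSum {G : Type u} [AddCommSemigroup G] :
    ∀ {m : ℕ} (g : Fin (m + 1) → G), toM (tupSum g) = ∑ i, toM (g i)
  | 0, g => by
    show toM (g 0) = _
    simp
  | m + 1, g => by
    show toM (tupSum (fun i => g i.castSucc) + g (Fin.last _)) = _
    rw [toM_add, toM_tupSum]
    conv_rhs => rw [Fin.sum_univ_castSucc]

lemma tupSum_comp_perm {G : Type u} [AddCommSemigroup G] {m : ℕ}
    (g : Fin (m + 1) → G) (π : Equiv.Perm (Fin (m + 1))) :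
    tupSum (g ∘ π) = tupSum g := by
  apply toM_injective
  rw [toM_tupSum, toM_tupSum]
  exact Equiv.sum_comp π (fun i => toM (g i))

/-- Schur instance of the transfer scheme: Schur's theorem on {1,…,n} plus
κ → (λ)ⁿ_{cⁿ} yields the uncountable Hindman–Schur theorem. -/
theorem stmt15 (l κ : Cardinal.{u}) (hl : ℵ₀ ≤ l) (c n : ℕ) (hc : 0 < c) (hn : 0 < n)
    (hschur : ∀ q : ℕ → Fin c, ∃ a b : ℕ, 0 < a ∧ 0 < b ∧ a + b ≤ n ∧
      q a = q b ∧ q b = q (a + b))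
    (hpart : ∀ F : (Fin n → κ.ord.ToType) → (Fin n → Fin c),
      ∃ X : Set κ.ord.ToType, #X = l ∧ ∃ r : Fin n → Fin c,
        ∀ g : Fin n → κ.ord.ToType, StrictMono g → (∀ j, g j ∈ X) → F g = r) :
    ∀ (G : Type u) [AddCommSemigroup G], #G = κ → ∀ f : G → Fin c,
      ∃ H : Set G, #H = l ∧ ∃ a b : ℕ, 0 < a ∧ 0 < b ∧ a + b ≤ n ∧
        ∃ i : Fin c, FSMono f {a, b, a + b} H i := by
  intro G _ hG f
  obtain ⟨e⟩ : Nonempty (κ.ord.ToType ≃ G) := by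
    rw [← Cardinal.eq, mk_ord_toType, hG]
  obtain ⟨X, hX, r, hr⟩ := hpart (fun w j =>
    f (tupSum (fun i : Fin (j.val + 1) => e (w (Fin.castLE j.isLt i)))))
  obtain ⟨a, b, ha, hb, hab, hqab, hqb⟩ := hschur (fun k =>
    if h : 0 < k ∧ k ≤ n then r ⟨k - 1, by omega⟩ else ⟨0, hc⟩)
  -- the set of elements of X with infinitely many elements of X above them
  set Y : Set κ.ord.ToType := {x | x ∈ X ∧ {y | y ∈ X ∧ x < y}.Infinite} with hYdef
  have hYsub : Y ⊆ X := fun x hx => hx.1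
  have hXinf : X.Infinite := by
    rw [← Set.infinite_coe_iff]
    exact Cardinal.infinite_iff.mpr (hX ▸ hl)
  have hBfin : (X \ Y).Finite := by
    by_contra hB'
    have hB : (X \ Y).Infinite := hB'
    obtain ⟨z0, hz0, hmin⟩ := (IsWellFounded.wf (r := ((· < ·) : κ.ord.ToType →
      κ.ord.ToType → Prop))).has_min (X \ Y) hB.nonempty
    have hz0fin : {y | y ∈ X ∧ z0 < y}.Finite := by
      by_contra h
      exact hz0.2 ⟨hz0.1, h⟩
    have hsub : X \ Y ⊆ insert z0 {y | y ∈ X ∧ z0 < y} := by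
      intro z hz
      rcases eq_or_lt_of_le (le_of_not_gt (hmin z hz)) with h | h
      · exact Or.inl h.symm
      · exact Or.inr ⟨hz.1, h⟩
    exact hB (hz0fin.insert z0 |>.subset hsub)
  have hYl : #Y = l := by
    refine le_antisymm (hX ▸ Cardinal.mk_le_mk_of_subset hYsub) ?_
    by_contra hlt
    push_neg at hlt
    have hXle : #X ≤ #Y + #(X \ Y : Set _) := by
      calc #X = #((Y ∪ (X \ Y)) : Set _) := by rw [Set.union_diff_cancel hYsub]
        _ ≤ #Y + #(X \ Y : Set _) := Cardinal.mk_union_le _ _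
    have : #X < l := lt_of_le_of_lt hXle
      (Cardinal.add_lt_of_lt hl hlt (lt_of_lt_of_le hBfin.lt_aleph0 hl))
    exact absurd hX this.ne
  refine ⟨e '' Y, ?_, a, b, ha, hb, hab, (if h : 0 < a ∧ a ≤ n then
    r ⟨a - 1, by omega⟩ else ⟨0, hc⟩), ?_⟩
  · rw [Cardinal.mk_image_eq e.injective, hYl]
  intro m hm g hginj hgH
  have hmem : m + 1 = a ∨ m + 1 = b ∨ m + 1 = a + b := by
    simpa using hm
  have hm1n : m + 1 ≤ n := by rcases hmem with h | h | h <;> omega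
  have hmn : m < n := by omega
  -- pull back to the ordinal
  set x : Fin (m + 1) → κ.ord.ToType := fun j => e.symm (g j) with hxdef
  have hxY : ∀ j, x j ∈ Y := by
    intro j
    obtain ⟨y, hy, hyg⟩ := hgH j
    have : e.symm (g j) = y := by rw [← hyg, Equiv.symm_apply_apply]
    rw [hxdef]; simpa [this]
  have hxinj : Function.Injective x := e.symm.injective.comp hginj
  set π := Tuple.sort x with hπdef
  have hsm : StrictMono (x ∘ π) :=
    (Tuple.monotone_sort x).strictMono_of_injective (hxinj.comp π.injective)
  set xmax := x (π (Fin.last m)) with hxmaxdef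
  have hS : {y | y ∈ X ∧ xmax < y}.Infinite := (hxY (π (Fin.last m))).2
  obtain ⟨t, htS, htcard⟩ := hS.exists_subset_card_eq (n - (m + 1))
  set w : Fin n → κ.ord.ToType := fun j =>
    if h : j.val < m + 1 then x (π ⟨j.val, h⟩)
    else ((t.orderIsoOfFin htcard ⟨j.val - (m + 1), by
      have := j.isLt; omega⟩ : t) : κ.ord.ToType) with hwdef
  have hwlow : ∀ (j : Fin n) (h : j.val < m + 1), w j = x (π ⟨j.val, h⟩) := by
    intro j h; rw [hwdef]; exact dif_pos h
  have hwhigh : ∀ (j : Fin n), ¬ j.val < m + 1 → w j ∈ X ∧ xmax < w j := by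
    intro j h
    have : w j = ((t.orderIsoOfFin htcard ⟨j.val - (m + 1), by
      have := j.isLt; omega⟩ : t) : κ.ord.ToType) := by rw [hwdef]; exact dif_neg h
    rw [this]
    exact htS (Subtype.mem _)
  have hwX : ∀ j, w j ∈ X := by
    intro j
    by_cases h : j.val < m + 1
    · rw [hwlow j h]; exact hYsub (hxY _)
    · exact (hwhigh j h).1
  have hwmono : StrictMono w := by
    intro j k hjk
    have hjk' : j.val < k.val := hjk
    by_cases hj : j.val < m + 1
    · by_cases hk : k.val < m + 1
      · rw [hwlow j hj, hwlow k hk]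
        exact hsm (show (⟨j.val, hj⟩ : Fin (m + 1)) < ⟨k.val, hk⟩ from hjk')
      · rw [hwlow j hj]
        calc x (π ⟨j.val, hj⟩) ≤ xmax := hsm.monotone (Fin.le_last _)
          _ < w k := (hwhigh k hk).2
    · have hk : ¬ k.val < m + 1 := by omega
      have hj' : w j = ((t.orderIsoOfFin htcard ⟨j.val - (m + 1), by
        have := j.isLt; omega⟩ : t) : κ.ord.ToType) := by rw [hwdef]; exact dif_neg hj
      have hk' : w k = ((t.orderIsoOfFin htcard ⟨k.val - (m + 1), by
        have := k.isLt; omega⟩ : t) : κ.ord.ToType) := by rw [hwdef]; exact dif_neg hk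
      rw [hj', hk']
      have : (⟨j.val - (m + 1), by have := j.isLt; omega⟩ : Fin (n - (m + 1))) <
          ⟨k.val - (m + 1), by have := k.isLt; omega⟩ := by
        show j.val - (m + 1) < k.val - (m + 1); omega
      exact Subtype.coe_lt_coe.mpr ((t.orderIsoOfFin htcard).strictMono this)
  have hFw := hr w hwmono hwX
  have key := congrFun hFw ⟨m, hmn⟩
  simp only [] at key
  have hcomp : (fun i : Fin (m + 1) =>
      e (w (Fin.castLE (⟨m, hmn⟩ : Fin n).isLt i))) = g ∘ π := by
    funext i
    have hi : (Fin.castLE (⟨m, hmn⟩ : Fin n).isLt i : Fin n).val < m + 1 := i.isLt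
    rw [hwlow _ hi]
    have : (⟨(Fin.castLE hmn i : Fin n).val, hi⟩ : Fin (m + 1)) = i := by
      apply Fin.ext; rfl
    rw [this]
    show e (e.symm (g (π i))) = g (π i)
    exact e.apply_symm_apply _
  rw [hcomp, tupSum_comp_perm] at key
  -- key : f (tupSum g) = r ⟨m, _⟩
  rw [key]
  have hval : ∀ (p : ℕ) (hp : 0 < p) (hpn : p ≤ n), p = m + 1 →
      (if h : 0 < p ∧ p ≤ n then r ⟨p - 1, by omega⟩ else ⟨0, hc⟩) = r ⟨m, hmn⟩ := by
    intro p hp hpn hpe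
    rw [dif_pos ⟨hp, hpn⟩]
    congr 1
    apply Fin.ext
    show p - 1 = m
    omega
  rcases hmem with h | h | h
  · rw [hval a ha (by omega) h.symm]
  · rw [hqab, hval b hb (by omega) h.symm]
  · rw [hqab, hqb, hval (a + b) (by omega) hab h.symm]
end
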